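/- arXiv:2303.17270 — 5 statements merged into one kernel-verified Lean document; each statement's English description precedes it below -/
import Mathlib

section
/- Let d, n, k ≥ 1, let Σ = Fin n, Q = Fin k. Let X_k ⊂ {0,1,…,k}^{ℤ^d} be the subshift of configurations having at most one nonzero coordinate, let X_{n,k} = Σ^{ℤ^d} × X_k, and let Y = Σ^{ℤ^d} × {0^{ℤ^d}} ⊂ X_{n,k}. Identify each moving-head (ℤ^d,n,k)-Turing machine with the self-map of X_{n,k} that fixes every point of Y and acts on X_{n,k} ∖ Y through the bijection sending (x,q,v) ∈ Σ^{ℤ^d} × Q × ℤ^d to the pair (x,y) with y_v = q and y_u = 0 for u ≠ v. Then TM(ℤ^d,n,k) = { φ ∈ End(X_{n,k}) : φ restricted to Y is the identity and φ^{−1}(Y) = Y }, and RTM(ℤ^d,n,k) = { φ ∈ Aut(X_{n,k}) : φ restricted to Y is the identity }. -/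
/-- The shift action on configurations: `(shiftC v x) u = x (u - v)`. -/
def shiftC {d : ℕ} {A : Type*} (v : Fin d → ℤ) (x : (Fin d → ℤ) → A) : (Fin d → ℤ) → A :=
  fun u => x (u - v)

/-- The moving-head space `Σ^{ℤ^d} × Q × ℤ^d`. -/
abbrev Head (d n k : ℕ) : Type :=
  ((Fin d → ℤ) → Fin n) × Fin k × (Fin d → ℤ)

/-- `T` is a moving-head `(ℤ^d,n,k)`-Turing machine. -/
def IsTM (d n k : ℕ) (T : Head d n k → Head d n k) : Prop :=
  ∃ (Fi Fo : Finset (Fin d → ℤ))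
    (f : ((Fin d → ℤ) → Fin n) × Fin k → ((Fin d → ℤ) → Fin n) × Fin k × (Fin d → ℤ)),
    (∀ (x y : (Fin d → ℤ) → Fin n) (q : Fin k),
        (∀ u ∈ Fi, x u = y u) → f (x, q) = f (y, q)) ∧
    ∀ (x : (Fin d → ℤ) → Fin n) (q : Fin k) (v : Fin d → ℤ),
      T (x, q, v) =
        ((fun u => if u - v ∈ Fo then (f (shiftC (-v) x, q)).1 (u - v) else x u),
         (f (shiftC (-v) x, q)).2.1,
         v + (f (shiftC (-v) x, q)).2.2)

/-- The ambient space `Σ^{ℤ^d} × (Q ∪ {0})^{ℤ^d}`, where `Q ∪ {0}` is `Fin (k+1)`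
(`0` meaning "no head"). -/
abbrev Amb (d n k : ℕ) : Type :=
  ((Fin d → ℤ) → Fin n) × ((Fin d → ℤ) → Fin (k + 1))

/-- The subshift `X_{n,k}`: configurations whose head layer has at most one nonzero
coordinate. -/
def Xnk (d n k : ℕ) : Set (Amb d n k) :=
  {p | ∀ u w : Fin d → ℤ, p.2 u ≠ 0 → p.2 w ≠ 0 → u = w}

/-- The headless part `Y = Σ^{ℤ^d} × {0^{ℤ^d}}`. -/
def Yset (d n k : ℕ) : Set (Amb d n k) :=
  {p | p.2 = fun _ => 0}

/-- The identification of a moving-head configuration `(x, q, v)` with the point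
`(x, y) ∈ X_{n,k}` where `y v = q` (nonzero, via `Fin.succ`) and `y u = 0` for `u ≠ v`. -/
def embedHead (d n k : ℕ) (c : Head d n k) : Amb d n k :=
  (c.1, fun u => if u = c.2.2 then Fin.succ c.2.1 else 0)

lemma embedHead_mem (d n k : ℕ) (c : Head d n k) : embedHead d n k c ∈ Xnk d n k := by
  intro u w hu hw
  by_cases h1 : u = c.2.2 <;> by_cases h2 : w = c.2.2 <;>
    simp_all [embedHead]

lemma shift_mem_Xnk (d n k : ℕ) {p : Amb d n k} (hp : p ∈ Xnk d n k) (v : Fin d → ℤ) :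
    (shiftC v p.1, shiftC v p.2) ∈ Xnk d n k := by
  intro u w hu hw
  have h := hp (u - v) (w - v) hu hw
  exact sub_left_inj.mp h

/-- The diagonal shift action on the subshift `X_{n,k}`. -/
def shiftXnk (d n k : ℕ) (v : Fin d → ℤ) (p : Xnk d n k) : Xnk d n k :=
  ⟨(shiftC v p.1.1, shiftC v p.1.2), shift_mem_Xnk d n k p.2 v⟩


section Helpers

open Classical

variable {d n k : ℕ}

/-! ### Basic shift lemmas -/

lemma shiftC_apply {A : Type*} (v : Fin d → ℤ) (x : (Fin d → ℤ) → A) (u : Fin d → ℤ) :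
    shiftC v x u = x (u - v) := rfl

lemma shiftC_shiftC {A : Type*} (a b : Fin d → ℤ) (x : (Fin d → ℤ) → A) :
    shiftC a (shiftC b x) = shiftC (a + b) x := by
  funext u; simp [shiftC, sub_sub]

lemma shiftC_zero {A : Type*} (x : (Fin d → ℤ) → A) : shiftC 0 x = x := by
  funext u; simp [shiftC]

/-! ### Yset and embedding lemmas -/

lemma mem_Yset_iff (p : Amb d n k) : p ∈ Yset d n k ↔ ∀ u, p.2 u = 0 := by
  constructor
  · intro h u; exact congrFun h u
  · intro h; funext u; exact h u

lemma embed_not_Yset (c : Head d n k) : embedHead d n k c ∉ Yset d n k := by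
  intro h
  have := (mem_Yset_iff _).1 h c.2.2
  simp [embedHead] at this

lemma embedHead_injective : Function.Injective (embedHead d n k) := by
  intro c c' h
  have h1 := congrArg Prod.fst h
  have h2 := congrArg Prod.snd h
  have h3 := congrFun h2 c.2.2
  simp [embedHead] at h3
  by_cases hv : c.2.2 = c'.2.2
  · rw [if_pos hv] at h3
    have hq : c.2.1 = c'.2.1 := Fin.succ_injective _ h3
    have h1' : c.1 = c'.1 := h1
    exact Prod.ext h1' (Prod.ext hq hv)
  · rw [if_neg hv] at h3
    exact absurd h3 (Fin.succ_ne_zero _)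

/-! ### Decoding -/

noncomputable def decodeH (p : Amb d n k) (h : ∃ u, p.2 u ≠ 0) : Head d n k :=
  (p.1, (p.2 h.choose).pred h.choose_spec, h.choose)

lemma decodeH_fst (p : Amb d n k) (h : ∃ u, p.2 u ≠ 0) : (decodeH p h).1 = p.1 := rfl

lemma decodeH_pos_spec (p : Amb d n k) (h : ∃ u, p.2 u ≠ 0) :
    p.2 (decodeH p h).2.2 ≠ 0 := h.choose_spec

lemma decodeH_state_spec (p : Amb d n k) (h : ∃ u, p.2 u ≠ 0) :
    Fin.succ (decodeH p h).2.1 = p.2 (decodeH p h).2.2 :=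
  Fin.succ_pred (p.2 h.choose) h.choose_spec

lemma decodeH_pos_eq {p : Amb d n k} (hp : p ∈ Xnk d n k) (h : ∃ u, p.2 u ≠ 0)
    {v : Fin d → ℤ} (hv : p.2 v ≠ 0) : (decodeH p h).2.2 = v :=
  hp _ _ h.choose_spec hv

lemma embed_decodeH {p : Amb d n k} (hp : p ∈ Xnk d n k) (h : ∃ u, p.2 u ≠ 0) :
    embedHead d n k (decodeH p h) = p := by
  have hpos := decodeH_pos_spec p h
  have hst := decodeH_state_spec p h
  refine Prod.ext rfl ?_
  show (fun u => if u = (decodeH p h).2.2 then Fin.succ (decodeH p h).2.1 else 0) = p.2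
  funext u
  by_cases hu : u = (decodeH p h).2.2
  · rw [if_pos hu, hu, hst]
  · rw [if_neg hu]
    by_contra h0
    have hne : p.2 u ≠ 0 := fun hc => h0 hc.symm
    exact hu (hp u _ hne hpos)

lemma decodeH_embed (c : Head d n k) (h : ∃ u, (embedHead d n k c).2 u ≠ 0) :
    decodeH (embedHead d n k c) h = c :=
  embedHead_injective (embed_decodeH (embedHead_mem d n k c) h)

lemma decodeH_congr {p q : Amb d n k} (e : p = q) (h : ∃ u, p.2 u ≠ 0)
    (h' : ∃ u, q.2 u ≠ 0) : decodeH p h = decodeH q h' := by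
  subst e; rfl

lemma embed_exists_ne (c : Head d n k) : ∃ u, (embedHead d n k c).2 u ≠ 0 :=
  ⟨c.2.2, by simp [embedHead, Fin.succ_ne_zero]⟩

end Helpers


section Topology

open Classical

variable {d n k : ℕ}

/-- Agreement of two ambient configurations on a finite window. -/
def AgreeOn (S : Finset (Fin d → ℤ)) (p q : Amb d n k) : Prop :=
  ∀ u ∈ S, p.1 u = q.1 u ∧ p.2 u = q.2 u

lemma AgreeOn.symm {S : Finset (Fin d → ℤ)} {p q : Amb d n k}
    (h : AgreeOn S p q) : AgreeOn S q p :=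
  fun u hu => ⟨(h u hu).1.symm, (h u hu).2.symm⟩

lemma isClosed_Xnk : IsClosed (Xnk d n k) := by
  have : Xnk d n k = ⋂ (u : Fin d → ℤ) (w : Fin d → ℤ),
      {p : Amb d n k | p.2 u ≠ 0 → p.2 w ≠ 0 → u = w} := by
    ext p; simp [Xnk, Set.mem_iInter]
  rw [this]
  refine isClosed_iInter fun u => isClosed_iInter fun w => ?_
  by_cases huw : u = w
  · have : {p : Amb d n k | p.2 u ≠ 0 → p.2 w ≠ 0 → u = w} = Set.univ := by
      ext p; simp [huw]
    rw [this]; exact isClosed_univ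
  · have : {p : Amb d n k | p.2 u ≠ 0 → p.2 w ≠ 0 → u = w} =
        {p : Amb d n k | p.2 u = 0} ∪ {p : Amb d n k | p.2 w = 0} := by
      ext p
      constructor
      · intro hp
        by_cases h1 : p.2 u = 0
        · exact Or.inl h1
        · by_cases h2 : p.2 w = 0
          · exact Or.inr h2
          · exact absurd (hp h1 h2) huw
      · rintro (h1 | h2) <;> intro ha hb <;> simp_all
    rw [this]
    have c1 : Continuous fun p : Amb d n k => p.2 u :=
      (continuous_apply u).comp continuous_snd
    have c2 : Continuous fun p : Amb d n k => p.2 w :=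
      (continuous_apply w).comp continuous_snd
    exact IsClosed.union (isClosed_singleton.preimage c1) (isClosed_singleton.preimage c2)

instance : CompactSpace (Xnk d n k) :=
  isCompact_iff_compactSpace.mp (isClosed_Xnk.isCompact)

/-- Every neighborhood in the ambient product space contains a cylinder. -/
lemma nbhd_window {p : Amb d n k} {s : Set (Amb d n k)} (hs : s ∈ nhds p) :
    ∃ W : Finset (Fin d → ℤ), ∀ q : Amb d n k, AgreeOn W p q → q ∈ s := by
  rw [nhds_prod_eq] at hs
  obtain ⟨t₁, ht₁, t₂, ht₂, hsub⟩ := Filter.mem_prod_iff.1 hs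
  rw [nhds_pi] at ht₁ ht₂
  obtain ⟨I₁, hI₁fin, f₁, hf₁, hsub₁⟩ := Filter.mem_pi.1 ht₁
  obtain ⟨I₂, hI₂fin, f₂, hf₂, hsub₂⟩ := Filter.mem_pi.1 ht₂
  refine ⟨hI₁fin.toFinset ∪ hI₂fin.toFinset, fun q hq => ?_⟩
  have hq1 : q.1 ∈ t₁ := by
    apply hsub₁
    intro i hi
    have : q.1 i = p.1 i :=
      (hq i (Finset.mem_union_left _ (hI₁fin.mem_toFinset.2 hi))).1.symm
    rw [this]
    exact mem_of_mem_nhds (hf₁ i)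
  have hq2 : q.2 ∈ t₂ := by
    apply hsub₂
    intro i hi
    have : q.2 i = p.2 i :=
      (hq i (Finset.mem_union_right _ (hI₂fin.mem_toFinset.2 hi))).2.symm
    rw [this]
    exact mem_of_mem_nhds (hf₂ i)
  exact hsub ⟨hq1, hq2⟩

/-- A continuous map from the compact space `X_{n,k}` to a discrete space is
determined by a single finite window. -/
lemma exists_window {A : Type*} [TopologicalSpace A] [DiscreteTopology A]
    (g : Xnk d n k → A) (hg : Continuous g) :
    ∃ S : Finset (Fin d → ℤ),
      ∀ p q : Xnk d n k, AgreeOn S (p : Amb d n k) (q : Amb d n k) → g p = g q := by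
  have key : ∀ p : Xnk d n k, ∃ W : Finset (Fin d → ℤ),
      ∀ q : Xnk d n k, AgreeOn W (p : Amb d n k) (q : Amb d n k) → g q = g p := by
    intro p
    have hopen : IsOpen (g ⁻¹' {g p}) := (isOpen_discrete _).preimage hg
    have hmem : g ⁻¹' {g p} ∈ nhds p := hopen.mem_nhds rfl
    rw [show (p : Xnk d n k) = ⟨(p : Amb d n k), p.2⟩ from rfl,
      nhds_subtype_eq_comap] at hmem
    obtain ⟨s, hs, hsub⟩ := Filter.mem_comap.1 hmem
    obtain ⟨W, hW⟩ := nbhd_window hs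
    exact ⟨W, fun q hq => hsub (hW _ hq)⟩
  choose Sp hSp using key
  set U : Xnk d n k → Set (Xnk d n k) :=
    fun p => {q : Xnk d n k | AgreeOn (Sp p) (p : Amb d n k) (q : Amb d n k)} with hU
  have hUopen : ∀ p, IsOpen (U p) := by
    intro p
    have : U p = ⋂ u ∈ Sp p,
        ({q : Xnk d n k | (q : Amb d n k).1 u = (p : Amb d n k).1 u} ∩
         {q : Xnk d n k | (q : Amb d n k).2 u = (p : Amb d n k).2 u}) := by
      ext q
      simp only [hU, Set.mem_setOf_eq, Set.mem_iInter, Set.mem_inter_iff, AgreeOn]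
      constructor
      · intro h u hu; exact ⟨(h u hu).1.symm, (h u hu).2.symm⟩
      · intro h u hu; exact ⟨(h u hu).1.symm, (h u hu).2.symm⟩
    rw [this]
    refine isOpen_biInter_finset fun u _ => IsOpen.inter ?_ ?_
    · show IsOpen ((fun q : Xnk d n k => (q : Amb d n k).1 u) ⁻¹'
        {(p : Amb d n k).1 u})
      exact IsOpen.preimage
        ((continuous_apply u).comp (continuous_fst.comp continuous_subtype_val))
        (isOpen_discrete _)
    · show IsOpen ((fun q : Xnk d n k => (q : Amb d n k).2 u) ⁻¹'
        {(p : Amb d n k).2 u})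
      exact IsOpen.preimage
        ((continuous_apply u).comp (continuous_snd.comp continuous_subtype_val))
        (isOpen_discrete _)
  have hcover : (Set.univ : Set (Xnk d n k)) ⊆ ⋃ p, U p := by
    intro p _
    exact Set.mem_iUnion.2 ⟨p, fun u hu => ⟨rfl, rfl⟩⟩
  obtain ⟨t, ht⟩ := isCompact_univ.elim_finite_subcover U hUopen hcover
  refine ⟨t.biUnion Sp, fun p q hpq => ?_⟩
  obtain ⟨i, hit, hpi⟩ : ∃ i ∈ t, p ∈ U i := by
    have := ht (Set.mem_univ p)
    simpa using this
  have hSpi : ∀ u ∈ Sp i, u ∈ t.biUnion Sp := fun u hu =>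
    Finset.mem_biUnion.2 ⟨i, hit, hu⟩
  have h1 : g p = g i := hSp i p hpi
  have h2 : g q = g i := by
    apply hSp i q
    intro u hu
    have e1 := hpi u hu
    have e2 := hpq u (hSpi u hu)
    exact ⟨e1.1.trans e2.1, e1.2.trans e2.2⟩
  rw [h1, h2]

/-- Conversely, a map determined by a finite window is continuous. -/
lemma window_continuous {A : Type*} [TopologicalSpace A] [DiscreteTopology A] [Nonempty A]
    (g : Xnk d n k → A) (S : Finset (Fin d → ℤ))
    (hg : ∀ p q : Xnk d n k, AgreeOn S (p : Amb d n k) (q : Amb d n k) → g p = g q) :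
    Continuous g := by
  set r : Xnk d n k → (({u // u ∈ S}) → Fin n × Fin (k + 1)) :=
    fun p s => ((p : Amb d n k).1 s.1, (p : Amb d n k).2 s.1) with hr
  have hrcont : Continuous r := by
    refine continuous_pi fun s => Continuous.prodMk ?_ ?_
    · exact (continuous_apply s.1).comp (continuous_fst.comp continuous_subtype_val)
    · exact (continuous_apply s.1).comp (continuous_snd.comp continuous_subtype_val)
  set h : (({u // u ∈ S}) → Fin n × Fin (k + 1)) → A :=
    fun z => if hz : ∃ p : Xnk d n k, r p = z then g hz.choose else Classical.arbitrary A
    with hh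
  have hgh : g = h ∘ r := by
    funext p
    have hz : ∃ q : Xnk d n k, r q = r p := ⟨p, rfl⟩
    simp only [hh, Function.comp_apply, dif_pos hz]
    apply hg
    intro u hu
    have h2 := congrFun hz.choose_spec (⟨u, hu⟩ : {u // u ∈ S})
    simp only [hr] at h2
    exact ⟨(congrArg Prod.fst h2).symm, (congrArg Prod.snd h2).symm⟩
  rw [hgh]
  exact (continuous_of_discreteTopology).comp hrcont

end Topology


section Phi

open Classical

variable {d n k : ℕ}

lemma decodeH_eq {p : Amb d n k} (hp : p ∈ Xnk d n k) (h : ∃ u, p.2 u ≠ 0)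
    {v : Fin d → ℤ} (hv : p.2 v ≠ 0) : decodeH p h = (p.1, (p.2 v).pred hv, v) := by
  refine Prod.ext rfl (Prod.ext ?_ (decodeH_pos_eq hp h hv))
  show (decodeH p h).2.1 = (p.2 v).pred hv
  have h1 : Fin.succ (decodeH p h).2.1 = Fin.succ ((p.2 v).pred hv) := by
    rw [decodeH_state_spec p h, decodeH_pos_eq hp h hv, Fin.succ_pred]
  exact Fin.succ_injective _ h1

/-- The self-map of `X_{n,k}` induced by a head machine `T`. -/
noncomputable def PhiT (T : Head d n k → Head d n k) (p : Xnk d n k) : Xnk d n k :=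
  if h : ∃ u, (p : Amb d n k).2 u ≠ 0 then
    ⟨embedHead d n k (T (decodeH (p : Amb d n k) h)), embedHead_mem d n k _⟩
  else p

lemma PhiT_of_head (T : Head d n k → Head d n k) (p : Xnk d n k)
    (h : ∃ u, (p : Amb d n k).2 u ≠ 0) :
    PhiT T p = ⟨embedHead d n k (T (decodeH (p : Amb d n k) h)), embedHead_mem d n k _⟩ :=
  dif_pos h

lemma PhiT_of_headless (T : Head d n k → Head d n k) (p : Xnk d n k)
    (h : ¬ ∃ u, (p : Amb d n k).2 u ≠ 0) : PhiT T p = p :=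
  dif_neg h

lemma PhiT_fixY (T : Head d n k → Head d n k) (p : Xnk d n k)
    (hp : (p : Amb d n k) ∈ Yset d n k) : PhiT T p = p := by
  apply PhiT_of_headless
  rw [mem_Yset_iff] at hp
  rintro ⟨u, hu⟩
  exact hu (hp u)

lemma PhiT_embed (T : Head d n k → Head d n k) (c : Head d n k) :
    PhiT T ⟨embedHead d n k c, embedHead_mem d n k c⟩ =
      ⟨embedHead d n k (T c), embedHead_mem d n k (T c)⟩ := by
  rw [PhiT_of_head T _ (embed_exists_ne c)]
  exact Subtype.ext (congrArg (embedHead d n k) (congrArg T (decodeH_embed c _)))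

lemma phi_eq_PhiT (φ : Xnk d n k → Xnk d n k) (T : Head d n k → Head d n k)
    (hY : ∀ p : Xnk d n k, (p : Amb d n k) ∈ Yset d n k → φ p = p)
    (hembed : ∀ c : Head d n k,
      φ ⟨embedHead d n k c, embedHead_mem d n k c⟩ =
        ⟨embedHead d n k (T c), embedHead_mem d n k (T c)⟩) :
    φ = PhiT T := by
  funext p
  by_cases h : ∃ u, (p : Amb d n k).2 u ≠ 0
  · have hp : p = ⟨embedHead d n k (decodeH (p : Amb d n k) h),
        embedHead_mem d n k _⟩ := Subtype.ext (embed_decodeH p.2 h).symm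
    rw [PhiT_of_head T p h]
    conv_lhs => rw [hp]
    exact hembed _
  · have hpY : (p : Amb d n k) ∈ Yset d n k := by
      rw [mem_Yset_iff]
      intro u
      by_contra hu
      exact h ⟨u, hu⟩
    rw [PhiT_of_headless T p h, hY p hpY]

lemma shiftXnk_embed (w : Fin d → ℤ) (c : Head d n k) :
    shiftXnk d n k w ⟨embedHead d n k c, embedHead_mem d n k c⟩ =
      ⟨embedHead d n k (shiftC w c.1, c.2.1, w + c.2.2),
        embedHead_mem d n k (shiftC w c.1, c.2.1, w + c.2.2)⟩ := by
  apply Subtype.ext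
  show (shiftC w (embedHead d n k c).1, shiftC w (embedHead d n k c).2) = _
  refine Prod.ext rfl ?_
  funext u
  show (embedHead d n k c).2 (u - w) =
    (embedHead d n k (shiftC w c.1, c.2.1, w + c.2.2)).2 u
  show (if u - w = c.2.2 then Fin.succ c.2.1 else 0) =
    (if u = w + c.2.2 then Fin.succ c.2.1 else 0)
  have hiff : (u - w = c.2.2) ↔ (u = w + c.2.2) := sub_eq_iff_eq_add'
  by_cases hc : u - w = c.2.2
  · rw [if_pos hc, if_pos (hiff.1 hc)]
  · rw [if_neg hc, if_neg (fun e => hc (hiff.2 e))]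

lemma IsTM.shift_compat {T : Head d n k → Head d n k} (hT : IsTM d n k T)
    (w : Fin d → ℤ) (c : Head d n k) :
    T (shiftC w c.1, c.2.1, w + c.2.2) =
      (shiftC w (T c).1, (T c).2.1, w + (T c).2.2) := by
  obtain ⟨Fi, Fo, f, hf, hfor⟩ := hT
  obtain ⟨x, q, v⟩ := c
  rw [hfor x q v, hfor (shiftC w x) q (w + v)]
  have e1 : shiftC (-(w + v)) (shiftC w x) = shiftC (-v) x := by
    rw [shiftC_shiftC]
    congr 1
    abel
  rw [e1]
  refine Prod.ext ?_ (Prod.ext rfl ?_)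
  · funext u
    show (if u - (w + v) ∈ Fo then (f (shiftC (-v) x, q)).1 (u - (w + v))
        else shiftC w x u) =
      shiftC w (fun u => if u - v ∈ Fo then (f (shiftC (-v) x, q)).1 (u - v) else x u) u
    rw [shiftC_apply]
    have e2 : u - (w + v) = u - w - v := by abel
    rw [e2]
    rfl
  · show w + v + (f (shiftC (-v) x, q)).2.2 = w + (v + (f (shiftC (-v) x, q)).2.2)
    rw [add_assoc]

lemma PhiT_shift {T : Head d n k → Head d n k} (hT : IsTM d n k T)
    (v : Fin d → ℤ) (p : Xnk d n k) :
    PhiT T (shiftXnk d n k v p) = shiftXnk d n k v (PhiT T p) := by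
  by_cases h : ∃ u, (p : Amb d n k).2 u ≠ 0
  · have hp : p = ⟨embedHead d n k (decodeH (p : Amb d n k) h),
        embedHead_mem d n k _⟩ := Subtype.ext (embed_decodeH p.2 h).symm
    rw [hp, shiftXnk_embed, PhiT_embed, PhiT_embed, shiftXnk_embed,
      hT.shift_compat]
  · have h' : ¬ ∃ u, ((shiftXnk d n k v p : Xnk d n k) : Amb d n k).2 u ≠ 0 := by
      push_neg at h ⊢
      intro u
      exact h (u - v)
    rw [PhiT_of_headless T p h, PhiT_of_headless T _ h']

lemma PhiT_Yset_iff (T : Head d n k → Head d n k) (p : Xnk d n k) :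
    ((PhiT T p : Xnk d n k) : Amb d n k) ∈ Yset d n k ↔
      (p : Amb d n k) ∈ Yset d n k := by
  by_cases h : ∃ u, (p : Amb d n k).2 u ≠ 0
  · rw [PhiT_of_head T p h]
    constructor
    · intro hY
      exact absurd hY (embed_not_Yset _)
    · intro hY
      obtain ⟨u, hu⟩ := h
      exact absurd (congrFun hY u) hu
  · rw [PhiT_of_headless T p h]

lemma PhiT_continuous (hn : 1 ≤ n) {T : Head d n k → Head d n k}
    (hT : IsTM d n k T) : Continuous (PhiT T) := by
  obtain ⟨Fi, Fo, f, hf, hfor⟩ := hT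
  haveI : Nonempty (Fin n) := ⟨⟨0, hn⟩⟩
  -- the finite set of possible head displacements
  set D : Finset (Fin d → ℤ) := Finset.image
    (fun zq : ({u // u ∈ Fi} → Fin n) × Fin k =>
      (f (fun u => if h : u ∈ Fi then zq.1 ⟨u, h⟩ else ⟨0, hn⟩, zq.2)).2.2)
    Finset.univ with hD
  have hDmem : ∀ (x : (Fin d → ℤ) → Fin n) (q : Fin k), (f (x, q)).2.2 ∈ D := by
    intro x q
    have he : f (x, q) = f (fun u => if h : u ∈ Fi then x u else ⟨0, hn⟩, q) := by
      apply hf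
      intro u hu
      rw [dif_pos hu]
    rw [he, hD]
    exact Finset.mem_image.2 ⟨(fun s => x s.1, q), Finset.mem_univ _, rfl⟩
  -- pointwise formulas
  have headful : ∀ (p : Xnk d n k) (v : Fin d → ℤ) (hv : (p : Amb d n k).2 v ≠ 0),
      ((PhiT T p : Xnk d n k) : Amb d n k) =
        embedHead d n k (T ((p : Amb d n k).1, ((p : Amb d n k).2 v).pred hv, v)) := by
    intro p v hv
    have h : ∃ u, (p : Amb d n k).2 u ≠ 0 := ⟨v, hv⟩
    have e := congrArg Subtype.val (PhiT_of_head T p h)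
    rw [e, decodeH_eq p.2 h hv]
  have tape_val : ∀ (p : Xnk d n k) (v : Fin d → ℤ) (hv : (p : Amb d n k).2 v ≠ 0)
      (u : Fin d → ℤ),
      ((PhiT T p : Xnk d n k) : Amb d n k).1 u =
        (if u - v ∈ Fo
          then (f (shiftC (-v) (p : Amb d n k).1, ((p : Amb d n k).2 v).pred hv)).1 (u - v)
          else (p : Amb d n k).1 u) := by
    intro p v hv u
    rw [headful p v hv, hfor]
    rfl
  have head_val : ∀ (p : Xnk d n k) (v : Fin d → ℤ) (hv : (p : Amb d n k).2 v ≠ 0)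
      (u : Fin d → ℤ),
      ((PhiT T p : Xnk d n k) : Amb d n k).2 u =
        (if u = v + (f (shiftC (-v) (p : Amb d n k).1, ((p : Amb d n k).2 v).pred hv)).2.2
          then Fin.succ (f (shiftC (-v) (p : Amb d n k).1, ((p : Amb d n k).2 v).pred hv)).2.1
          else 0) := by
    intro p v hv u
    rw [headful p v hv, hfor]
    rfl
  have same_f : ∀ (p q : Xnk d n k) (v : Fin d → ℤ)
      (hvp : (p : Amb d n k).2 v ≠ 0) (hvq : (q : Amb d n k).2 v ≠ 0),
      (p : Amb d n k).2 v = (q : Amb d n k).2 v →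
      (∀ z ∈ Fi, (p : Amb d n k).1 (z + v) = (q : Amb d n k).1 (z + v)) →
      f (shiftC (-v) (p : Amb d n k).1, ((p : Amb d n k).2 v).pred hvp) =
        f (shiftC (-v) (q : Amb d n k).1, ((q : Amb d n k).2 v).pred hvq) := by
    intro p q v hvp hvq h2 h1
    have hqe : ((p : Amb d n k).2 v).pred hvp = ((q : Amb d n k).2 v).pred hvq := by
      have hs : Fin.succ (((p : Amb d n k).2 v).pred hvp) =
          Fin.succ (((q : Amb d n k).2 v).pred hvq) := by
        rw [Fin.succ_pred, Fin.succ_pred, h2]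
      exact Fin.succ_injective _ hs
    rw [hqe]
    apply hf
    intro z hz
    simp only [shiftC_apply, sub_neg_eq_add]
    exact h1 z hz
  -- window for the tape layer
  set S₁ : (Fin d → ℤ) → Finset (Fin d → ℤ) := fun u =>
    insert u ((Fo.image (fun w => u - w)) ∪
      ((Fo ×ˢ Fi).image (fun wz => u - wz.1 + wz.2))) with hS₁
  have tape_window : ∀ u, ∀ p q : Xnk d n k,
      AgreeOn (S₁ u) (p : Amb d n k) (q : Amb d n k) →
      ((PhiT T p : Xnk d n k) : Amb d n k).1 u =
        ((PhiT T q : Xnk d n k) : Amb d n k).1 u := by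
    intro u p q hAg
    have mu : u ∈ S₁ u := Finset.mem_insert_self _ _
    have mv : ∀ w ∈ Fo, u - w ∈ S₁ u := fun w hw =>
      Finset.mem_insert_of_mem (Finset.mem_union_left _
        (Finset.mem_image.2 ⟨w, hw, rfl⟩))
    have mfz : ∀ w ∈ Fo, ∀ z ∈ Fi, u - w + z ∈ S₁ u := fun w hw z hz =>
      Finset.mem_insert_of_mem (Finset.mem_union_right _
        (Finset.mem_image.2 ⟨(w, z), Finset.mem_product.2 ⟨hw, hz⟩, rfl⟩))
    by_cases hp1 : ∃ w, (p : Amb d n k).2 w ≠ 0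
    · obtain ⟨vp, hvp⟩ := hp1
      by_cases hin : u - vp ∈ Fo
      · -- head visible in the window
        have hvpS : vp ∈ S₁ u := by
          have := mv _ hin
          rwa [sub_sub_cancel] at this
        have h2 : (p : Amb d n k).2 vp = (q : Amb d n k).2 vp := (hAg vp hvpS).2
        have hvq : (q : Amb d n k).2 vp ≠ 0 := h2 ▸ hvp
        have htape : ∀ z ∈ Fi, (p : Amb d n k).1 (z + vp) = (q : Amb d n k).1 (z + vp) := by
          intro z hz
          have hm := mfz _ hin z hz
          rw [sub_sub_cancel] at hm
          have := (hAg (vp + z) hm).1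
          rwa [add_comm vp z] at this
        rw [tape_val p vp hvp u, tape_val q vp hvq u,
          same_f p q vp hvp hvq h2 htape, if_pos hin, if_pos hin]
      · -- head invisible: tape unchanged at u on both sides
        rw [tape_val p vp hvp u, if_neg hin]
        by_cases hq1 : ∃ w, (q : Amb d n k).2 w ≠ 0
        · obtain ⟨vq, hvq⟩ := hq1
          have hqin : ¬ (u - vq ∈ Fo) := by
            intro hqin
            have hvqS : vq ∈ S₁ u := by
              have := mv _ hqin
              rwa [sub_sub_cancel] at this
            have : (p : Amb d n k).2 vq ≠ 0 := by
              rw [(hAg vq hvqS).2]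
              exact hvq
            have := p.2 vp vq hvp this
            rw [← this] at hqin
            exact hin hqin
          rw [tape_val q vq hvq u, if_neg hqin]
          exact (hAg u mu).1
        · rw [PhiT_of_headless T q hq1]
          exact (hAg u mu).1
    · rw [PhiT_of_headless T p hp1]
      by_cases hq1 : ∃ w, (q : Amb d n k).2 w ≠ 0
      · obtain ⟨vq, hvq⟩ := hq1
        have hqin : ¬ (u - vq ∈ Fo) := by
          intro hqin
          have hvqS : vq ∈ S₁ u := by
            have := mv _ hqin
            rwa [sub_sub_cancel] at this
          apply hp1
          refine ⟨vq, ?_⟩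
          rw [(hAg vq hvqS).2]
          exact hvq
        rw [tape_val q vq hvq u, if_neg hqin]
        exact (hAg u mu).1
      · rw [PhiT_of_headless T q hq1]
        exact (hAg u mu).1
  -- window for the head layer
  set S₂ : (Fin d → ℤ) → Finset (Fin d → ℤ) := fun u =>
    (D.image (fun δ => u - δ)) ∪ ((D ×ˢ Fi).image (fun δz => u - δz.1 + δz.2)) with hS₂
  have head_window : ∀ u, ∀ p q : Xnk d n k,
      AgreeOn (S₂ u) (p : Amb d n k) (q : Amb d n k) →
      ((PhiT T p : Xnk d n k) : Amb d n k).2 u =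
        ((PhiT T q : Xnk d n k) : Amb d n k).2 u := by
    intro u p q hAg
    have mδ : ∀ δ ∈ D, u - δ ∈ S₂ u := fun δ hδ =>
      Finset.mem_union_left _ (Finset.mem_image.2 ⟨δ, hδ, rfl⟩)
    have mδz : ∀ δ ∈ D, ∀ z ∈ Fi, u - δ + z ∈ S₂ u := fun δ hδ z hz =>
      Finset.mem_union_right _
        (Finset.mem_image.2 ⟨(δ, z), Finset.mem_product.2 ⟨hδ, hz⟩, rfl⟩)
    -- an auxiliary: if a head is at a non-candidate position, the output head layer
    -- vanishes at u
    have vanish : ∀ (r : Xnk d n k) (v : Fin d → ℤ) (hv : (r : Amb d n k).2 v ≠ 0),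
        v ∉ D.image (fun δ => u - δ) →
        ((PhiT T r : Xnk d n k) : Amb d n k).2 u = 0 := by
      intro r v hv hnc
      rw [head_val r v hv u]
      refine if_neg ?_
      intro hcond
      apply hnc
      refine Finset.mem_image.2 ⟨(f (shiftC (-v) (r : Amb d n k).1,
        ((r : Amb d n k).2 v).pred hv)).2.2, hDmem _ _, ?_⟩
      rw [hcond]
      abel
    by_cases hp1 : ∃ w, (p : Amb d n k).2 w ≠ 0
    · obtain ⟨vp, hvp⟩ := hp1
      by_cases hcand : vp ∈ D.image (fun δ => u - δ)
      · have hvpS : vp ∈ S₂ u := Finset.mem_union_left _ hcand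
        have h2 : (p : Amb d n k).2 vp = (q : Amb d n k).2 vp := (hAg vp hvpS).2
        have hvq : (q : Amb d n k).2 vp ≠ 0 := h2 ▸ hvp
        obtain ⟨δ, hδD, hδ⟩ := Finset.mem_image.1 hcand
        have htape : ∀ z ∈ Fi, (p : Amb d n k).1 (z + vp) = (q : Amb d n k).1 (z + vp) := by
          intro z hz
          have hm := mδz δ hδD z hz
          rw [hδ] at hm
          have := (hAg (vp + z) hm).1
          rwa [add_comm vp z] at this
        rw [head_val p vp hvp u, head_val q vp hvq u,
          same_f p q vp hvp hvq h2 htape]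
      · rw [vanish p vp hvp hcand]
        by_cases hq1 : ∃ w, (q : Amb d n k).2 w ≠ 0
        · obtain ⟨vq, hvq⟩ := hq1
          have hqcand : vq ∉ D.image (fun δ => u - δ) := by
            intro hqc
            have hvqS : vq ∈ S₂ u := Finset.mem_union_left _ hqc
            have : (p : Amb d n k).2 vq ≠ 0 := by
              rw [(hAg vq hvqS).2]
              exact hvq
            have := p.2 vp vq hvp this
            rw [this] at hcand
            exact hcand hqc
          rw [vanish q vq hvq hqcand]
        · rw [PhiT_of_headless T q hq1]
          push_neg at hq1
          exact (hq1 u).symm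
    · rw [PhiT_of_headless T p hp1]
      push_neg at hp1
      rw [hp1 u]
      by_cases hq1 : ∃ w, (q : Amb d n k).2 w ≠ 0
      · obtain ⟨vq, hvq⟩ := hq1
        have hqcand : vq ∉ D.image (fun δ => u - δ) := by
          intro hqc
          have hvqS : vq ∈ S₂ u := Finset.mem_union_left _ hqc
          have : (p : Amb d n k).2 vq ≠ 0 := by
            rw [(hAg vq hvqS).2]
            exact hvq
          exact this (hp1 vq)
        rw [vanish q vq hvq hqcand]
      · rw [PhiT_of_headless T q hq1]
        push_neg at hq1
        exact (hq1 u).symm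
  -- assemble continuity
  have hc : Continuous (fun p : Xnk d n k => ((PhiT T p : Xnk d n k) : Amb d n k)) := by
    refine Continuous.prodMk ?_ ?_
    · refine continuous_pi fun u => ?_
      exact window_continuous (fun p => ((PhiT T p : Xnk d n k) : Amb d n k).1 u)
        (S₁ u) (tape_window u)
    · refine continuous_pi fun u => ?_
      exact window_continuous (fun p => ((PhiT T p : Xnk d n k) : Amb d n k).2 u)
        (S₂ u) (head_window u)
  exact Continuous.subtype_mk hc fun p => (PhiT T p).2

end Phi


section CHL

open Classical

variable {d n k : ℕ}

/-- The Curtis–Hedlund–Lyndon direction: a continuous shift-commuting self-map of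
`X_{n,k}` fixing `Y` pointwise with `φ⁻¹(Y) ⊆ Y` is induced by a Turing machine. -/
lemma chl_main (hn : 1 ≤ n) (φ : Xnk d n k → Xnk d n k)
    (hcont : Continuous φ)
    (hcomm : ∀ (v : Fin d → ℤ) (p : Xnk d n k),
      φ (shiftXnk d n k v p) = shiftXnk d n k v (φ p))
    (hY : ∀ p : Xnk d n k, (p : Amb d n k) ∈ Yset d n k → φ p = p)
    (hpre : ∀ p : Xnk d n k, ((φ p : Xnk d n k) : Amb d n k) ∈ Yset d n k →
      (p : Amb d n k) ∈ Yset d n k) :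
    ∃ T : Head d n k → Head d n k, IsTM d n k T ∧
      ∀ c : Head d n k,
        φ ⟨embedHead d n k c, embedHead_mem d n k c⟩ =
          ⟨embedHead d n k (T c), embedHead_mem d n k (T c)⟩ := by
  haveI : Nonempty (Fin n) := ⟨⟨0, hn⟩⟩
  have hnY : ∀ c : Head d n k,
      ∃ u, ((φ ⟨embedHead d n k c, embedHead_mem d n k c⟩ : Xnk d n k) : Amb d n k).2 u ≠ 0 := by
    intro c
    by_contra h0
    push_neg at h0
    have hmem : ((φ ⟨embedHead d n k c, embedHead_mem d n k c⟩ : Xnk d n k) : Amb d n k)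
        ∈ Yset d n k := (mem_Yset_iff _).2 h0
    exact embed_not_Yset c (hpre _ hmem)
  set T : Head d n k → Head d n k := fun c =>
    decodeH (↑(φ ⟨embedHead d n k c, embedHead_mem d n k c⟩)) (hnY c) with hTdef
  have hTembed : ∀ c : Head d n k,
      φ ⟨embedHead d n k c, embedHead_mem d n k c⟩ =
        ⟨embedHead d n k (T c), embedHead_mem d n k (T c)⟩ := by
    intro c
    exact Subtype.ext (embed_decodeH (φ _).2 (hnY c)).symm
  -- the uniform window from compactness
  set G : Xnk d n k → Fin n × Fin (k + 1) := fun p =>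
    (((φ p : Xnk d n k) : Amb d n k).1 0, ((φ p : Xnk d n k) : Amb d n k).2 0) with hG
  have hGc : Continuous G := by
    refine Continuous.prodMk ?_ ?_
    · exact (continuous_apply 0).comp (continuous_fst.comp
        (continuous_subtype_val.comp hcont))
    · exact (continuous_apply 0).comp (continuous_snd.comp
        (continuous_subtype_val.comp hcont))
  obtain ⟨S, hS⟩ := exists_window G hGc
  -- pointwise evaluation through the shift
  have hGeval : ∀ (p : Xnk d n k) (u : Fin d → ℤ),
      ((φ p : Xnk d n k) : Amb d n k).1 u =
        ((φ (shiftXnk d n k (-u) p) : Xnk d n k) : Amb d n k).1 0 ∧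
      ((φ p : Xnk d n k) : Amb d n k).2 u =
        ((φ (shiftXnk d n k (-u) p) : Xnk d n k) : Amb d n k).2 0 := by
    intro p u
    rw [hcomm (-u) p]
    have e : (0 : Fin d → ℤ) - (-u) = u := by abel
    constructor
    · show ((φ p : Xnk d n k) : Amb d n k).1 u =
        ((φ p : Xnk d n k) : Amb d n k).1 (0 - -u)
      rw [e]
    · show ((φ p : Xnk d n k) : Amb d n k).2 u =
        ((φ p : Xnk d n k) : Amb d n k).2 (0 - -u)
      rw [e]
  -- locality of φ
  have hlocal : ∀ (p q : Xnk d n k) (u : Fin d → ℤ),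
      (∀ s ∈ S, (p : Amb d n k).1 (s + u) = (q : Amb d n k).1 (s + u) ∧
        (p : Amb d n k).2 (s + u) = (q : Amb d n k).2 (s + u)) →
      ((φ p : Xnk d n k) : Amb d n k).1 u = ((φ q : Xnk d n k) : Amb d n k).1 u ∧
      ((φ p : Xnk d n k) : Amb d n k).2 u = ((φ q : Xnk d n k) : Amb d n k).2 u := by
    intro p q u hA
    have hAg : AgreeOn S ((shiftXnk d n k (-u) p : Xnk d n k) : Amb d n k)
        ((shiftXnk d n k (-u) q : Xnk d n k) : Amb d n k) := by
      intro s hs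
      have e : s - (-u) = s + u := sub_neg_eq_add s u
      constructor
      · show (p : Amb d n k).1 (s - -u) = (q : Amb d n k).1 (s - -u)
        rw [e]
        exact (hA s hs).1
      · show (p : Amb d n k).2 (s - -u) = (q : Amb d n k).2 (s - -u)
        rw [e]
        exact (hA s hs).2
    have hgs := hS _ _ hAg
    constructor
    · rw [(hGeval p u).1, (hGeval q u).1]
      exact congrArg Prod.fst hgs
    · rw [(hGeval p u).2, (hGeval q u).2]
      exact congrArg Prod.snd hgs
  -- away from the head, φ does nothing
  have hfix : ∀ (p : Xnk d n k) (u : Fin d → ℤ),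
      (∀ s ∈ S, (p : Amb d n k).2 (s + u) = 0) →
      ((φ p : Xnk d n k) : Amb d n k).1 u = (p : Amb d n k).1 u ∧
      ((φ p : Xnk d n k) : Amb d n k).2 u = 0 := by
    intro p u h0
    set p₀ : Xnk d n k := ⟨((p : Amb d n k).1, fun _ => (0 : Fin (k + 1))),
      fun a b ha _ => absurd rfl ha⟩ with hp₀
    have hA : ∀ s ∈ S, (p : Amb d n k).1 (s + u) = (p₀ : Amb d n k).1 (s + u) ∧
        (p : Amb d n k).2 (s + u) = (p₀ : Amb d n k).2 (s + u) :=
      fun s hs => ⟨rfl, h0 s hs⟩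
    have hl := hlocal p p₀ u hA
    have hY0 : φ p₀ = p₀ := hY p₀ rfl
    rw [hY0] at hl
    exact ⟨hl.1, hl.2⟩
  -- the local data
  set Fo : Finset (Fin d → ℤ) := S.image (fun s => -s) with hFo
  set Fi : Finset (Fin d → ℤ) := (S ×ˢ S).image (fun ab => ab.1 - ab.2) with hFi
  have memFo : ∀ w : Fin d → ℤ, w ∈ Fo ↔ -w ∈ S := by
    intro w
    constructor
    · intro h
      obtain ⟨s, hs, rfl⟩ := Finset.mem_image.1 h
      rwa [neg_neg]
    · intro h
      exact Finset.mem_image.2 ⟨-w, h, neg_neg w⟩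
  -- vanishing off Fo
  have claimB : ∀ (x : (Fin d → ℤ) → Fin n) (q : Fin k) (w : Fin d → ℤ), w ∉ Fo →
      ((φ ⟨embedHead d n k (x, q, 0), embedHead_mem d n k (x, q, 0)⟩ : Xnk d n k)
        : Amb d n k).2 w = 0 ∧
      ((φ ⟨embedHead d n k (x, q, 0), embedHead_mem d n k (x, q, 0)⟩ : Xnk d n k)
        : Amb d n k).1 w = x w := by
    intro x q w hw
    have h0 : ∀ s ∈ S, (embedHead d n k (x, q, 0)).2 (s + w) = 0 := by
      intro s hs
      have hne : s + w ≠ 0 := by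
        intro e
        apply hw
        rw [memFo]
        have hsw : s = -w := eq_neg_of_add_eq_zero_left e
        rwa [← hsw]
      show (if s + w = (0 : Fin d → ℤ) then Fin.succ q else 0) = 0
      rw [if_neg hne]
    have hfx := hfix ⟨embedHead d n k (x, q, 0), embedHead_mem d n k (x, q, 0)⟩ w h0
    exact ⟨hfx.2, hfx.1⟩
  -- agreement inside Fo
  have claimA : ∀ (x y : (Fin d → ℤ) → Fin n) (q : Fin k) (w : Fin d → ℤ),
      (∀ z ∈ Fi, x z = y z) → -w ∈ S →
      ((φ ⟨embedHead d n k (x, q, 0), embedHead_mem d n k (x, q, 0)⟩ : Xnk d n k)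
        : Amb d n k).1 w =
      ((φ ⟨embedHead d n k (y, q, 0), embedHead_mem d n k (y, q, 0)⟩ : Xnk d n k)
        : Amb d n k).1 w ∧
      ((φ ⟨embedHead d n k (x, q, 0), embedHead_mem d n k (x, q, 0)⟩ : Xnk d n k)
        : Amb d n k).2 w =
      ((φ ⟨embedHead d n k (y, q, 0), embedHead_mem d n k (y, q, 0)⟩ : Xnk d n k)
        : Amb d n k).2 w := by
    intro x y q w hxy hwS
    apply hlocal
    intro s hs
    constructor
    · show x (s + w) = y (s + w)
      apply hxy
      rw [hFi]
      refine Finset.mem_image.2 ⟨(s, -w), Finset.mem_product.2 ⟨hs, hwS⟩, ?_⟩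
      exact sub_neg_eq_add s w
    · rfl
  -- the local rule
  set F : ((Fin d → ℤ) → Fin n) × Fin k →
      ((Fin d → ℤ) → Fin n) × Fin k × (Fin d → ℤ) := fun xq =>
    ((fun w => if w ∈ Fo then (T (xq.1, xq.2, 0)).1 w else ⟨0, hn⟩),
      (T (xq.1, xq.2, 0)).2.1, (T (xq.1, xq.2, 0)).2.2) with hF
  refine ⟨T, ⟨Fi, Fo, F, ?_, ?_⟩, hTembed⟩
  · -- locality of F
    intro x y q hxy
    have hkey : ∀ w : Fin d → ℤ,
        ((φ ⟨embedHead d n k (x, q, 0), embedHead_mem d n k (x, q, 0)⟩ : Xnk d n k)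
          : Amb d n k).2 w =
        ((φ ⟨embedHead d n k (y, q, 0), embedHead_mem d n k (y, q, 0)⟩ : Xnk d n k)
          : Amb d n k).2 w := by
      intro w
      by_cases hw : -w ∈ S
      · exact (claimA x y q w hxy hw).2
      · have hwFo : w ∉ Fo := fun hc => hw ((memFo w).1 hc)
        rw [(claimB x q w hwFo).1, (claimB y q w hwFo).1]
    -- decoded data agree
    have hpos1 := decodeH_pos_spec
      ((φ ⟨embedHead d n k (x, q, 0), embedHead_mem d n k (x, q, 0)⟩ : Xnk d n k)
        : Amb d n k) (hnY (x, q, 0))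
    have hposy : ((φ ⟨embedHead d n k (y, q, 0), embedHead_mem d n k (y, q, 0)⟩
        : Xnk d n k) : Amb d n k).2 (T (x, q, 0)).2.2 ≠ 0 := by
      rw [← hkey]
      exact hpos1
    have hpos2 : (T (y, q, 0)).2.2 = (T (x, q, 0)).2.2 :=
      decodeH_pos_eq (φ _).2 (hnY (y, q, 0)) hposy
    have hst : (T (y, q, 0)).2.1 = (T (x, q, 0)).2.1 := by
      apply Fin.succ_injective
      have h1 := decodeH_state_spec
        ((φ ⟨embedHead d n k (y, q, 0), embedHead_mem d n k (y, q, 0)⟩ : Xnk d n k)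
          : Amb d n k) (hnY (y, q, 0))
      have h2 := decodeH_state_spec
        ((φ ⟨embedHead d n k (x, q, 0), embedHead_mem d n k (x, q, 0)⟩ : Xnk d n k)
          : Amb d n k) (hnY (x, q, 0))
      show Fin.succ (T (y, q, 0)).2.1 = Fin.succ (T (x, q, 0)).2.1
      rw [h1, h2]
      show ((φ ⟨embedHead d n k (y, q, 0), embedHead_mem d n k (y, q, 0)⟩ : Xnk d n k)
          : Amb d n k).2 (T (y, q, 0)).2.2 =
        ((φ ⟨embedHead d n k (x, q, 0), embedHead_mem d n k (x, q, 0)⟩ : Xnk d n k)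
          : Amb d n k).2 (T (x, q, 0)).2.2
      rw [hpos2, hkey]
    show ((fun w => if w ∈ Fo then (T (x, q, 0)).1 w else ⟨0, hn⟩),
        (T (x, q, 0)).2.1, (T (x, q, 0)).2.2) =
      ((fun w => if w ∈ Fo then (T (y, q, 0)).1 w else ⟨0, hn⟩),
        (T (y, q, 0)).2.1, (T (y, q, 0)).2.2)
    refine Prod.ext ?_ (Prod.ext hst.symm hpos2.symm)
    show (fun w => if w ∈ Fo then (T (x, q, 0)).1 w else ⟨0, hn⟩) =
      (fun w => if w ∈ Fo then (T (y, q, 0)).1 w else ⟨0, hn⟩)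
    funext w
    show (if w ∈ Fo then (T (x, q, 0)).1 w else ⟨0, hn⟩) =
      (if w ∈ Fo then (T (y, q, 0)).1 w else ⟨0, hn⟩)
    by_cases hw : w ∈ Fo
    · rw [if_pos hw, if_pos hw]
      show ((φ ⟨embedHead d n k (x, q, 0), embedHead_mem d n k (x, q, 0)⟩ : Xnk d n k)
          : Amb d n k).1 w =
        ((φ ⟨embedHead d n k (y, q, 0), embedHead_mem d n k (y, q, 0)⟩ : Xnk d n k)
          : Amb d n k).1 w
      exact (claimA x y q w hxy ((memFo w).1 hw)).1
    · rw [if_neg hw, if_neg hw]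
  · -- the defining formula
    intro x q v
    set x' : (Fin d → ℤ) → Fin n := shiftC (-v) x with hx'
    have hx'h : shiftC v x' = x := by
      rw [hx', shiftC_shiftC]
      have hz : v + -v = (0 : Fin d → ℤ) := by abel
      rw [hz, shiftC_zero]
    have hembed_shift : (⟨embedHead d n k (x, q, v), embedHead_mem d n k (x, q, v)⟩
        : Xnk d n k) =
        shiftXnk d n k v ⟨embedHead d n k (x', q, 0), embedHead_mem d n k (x', q, 0)⟩ := by
      rw [shiftXnk_embed]
      apply Subtype.ext
      show embedHead d n k (x, q, v) = embedHead d n k (shiftC v x', q, v + 0)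
      exact congrArg (embedHead d n k) (by rw [hx'h, add_zero])
    have e3 : φ ⟨embedHead d n k (x, q, v), embedHead_mem d n k (x, q, v)⟩ =
        ⟨embedHead d n k (shiftC v (T (x', q, 0)).1, (T (x', q, 0)).2.1,
            v + (T (x', q, 0)).2.2),
          embedHead_mem d n k _⟩ := by
      rw [hembed_shift, hcomm, hTembed (x', q, 0), shiftXnk_embed]
    have e4 : T (x, q, v) = (shiftC v (T (x', q, 0)).1, (T (x', q, 0)).2.1,
        v + (T (x', q, 0)).2.2) := by
      show decodeH ((φ ⟨embedHead d n k (x, q, v), embedHead_mem d n k (x, q, v)⟩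
          : Xnk d n k) : Amb d n k) (hnY (x, q, v)) = _
      calc decodeH ((φ ⟨embedHead d n k (x, q, v), embedHead_mem d n k (x, q, v)⟩
            : Xnk d n k) : Amb d n k) (hnY (x, q, v))
          = decodeH (embedHead d n k (shiftC v (T (x', q, 0)).1, (T (x', q, 0)).2.1,
              v + (T (x', q, 0)).2.2)) (embed_exists_ne _) :=
            decodeH_congr (congrArg Subtype.val e3) _ _
        _ = _ := decodeH_embed _ _
    rw [e4]
    refine Prod.ext ?_ rfl
    funext u
    by_cases hu : u - v ∈ Fo
    · show (T (x', q, 0)).1 (u - v) =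
        if u - v ∈ Fo then (F (shiftC (-v) x, q)).1 (u - v) else x u
      rw [if_pos hu]
      show (T (x', q, 0)).1 (u - v) =
        if u - v ∈ Fo then (T (x', q, 0)).1 (u - v) else ⟨0, hn⟩
      rw [if_pos hu]
    · show (T (x', q, 0)).1 (u - v) =
        if u - v ∈ Fo then (F (shiftC (-v) x, q)).1 (u - v) else x u
      rw [if_neg hu]
      have hB : ((φ ⟨embedHead d n k (x', q, 0), embedHead_mem d n k (x', q, 0)⟩
          : Xnk d n k) : Amb d n k).1 (u - v) = x' (u - v) := (claimB x' q (u - v) hu).2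
      have hB' : (T (x', q, 0)).1 (u - v) = x' (u - v) := hB
      rw [hB']
      show x ((u - v) - -v) = x u
      exact congrArg x (by abel)

end CHL

/-- Under the identification of moving-head Turing machines with
self-maps of `X_{n,k}` fixing `Y` pointwise and acting on `X_{n,k} ∖ Y` through
`embedHead`, the monoid `TM(ℤ^d,n,k)` is exactly
`{φ ∈ End(X_{n,k}) : φ|_Y = id and φ⁻¹(Y) = Y}`, and the group `RTM(ℤ^d,n,k)` is
exactly `{φ ∈ Aut(X_{n,k}) : φ|_Y = id}`. -/
theorem TM_RTM_eq_End_Aut_fixing_Y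
    (d n k : ℕ) (hd : 1 ≤ d) (hn : 1 ≤ n) (hk : 1 ≤ k) :
    (∀ φ : Xnk d n k → Xnk d n k,
      ((Continuous φ ∧ ∀ (v : Fin d → ℤ) (p : Xnk d n k),
          φ (shiftXnk d n k v p) = shiftXnk d n k v (φ p)) ∧
        (∀ p : Xnk d n k, (p : Amb d n k) ∈ Yset d n k → φ p = p) ∧
        {p : Xnk d n k | ((φ p : Xnk d n k) : Amb d n k) ∈ Yset d n k} =
          {p : Xnk d n k | (p : Amb d n k) ∈ Yset d n k})
      ↔
      (∃ T : Head d n k → Head d n k, IsTM d n k T ∧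
        (∀ p : Xnk d n k, (p : Amb d n k) ∈ Yset d n k → φ p = p) ∧
        ∀ c : Head d n k,
          φ ⟨embedHead d n k c, embedHead_mem d n k c⟩ =
            ⟨embedHead d n k (T c), embedHead_mem d n k (T c)⟩))
    ∧
    (∀ φ : Xnk d n k → Xnk d n k,
      ((∃ ψ : Xnk d n k → Xnk d n k,
          Continuous φ ∧ Continuous ψ ∧
          (∀ (v : Fin d → ℤ) (p : Xnk d n k),
            φ (shiftXnk d n k v p) = shiftXnk d n k v (φ p)) ∧
          (∀ (v : Fin d → ℤ) (p : Xnk d n k),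
            ψ (shiftXnk d n k v p) = shiftXnk d n k v (ψ p)) ∧
          φ ∘ ψ = id ∧ ψ ∘ φ = id) ∧
        (∀ p : Xnk d n k, (p : Amb d n k) ∈ Yset d n k → φ p = p))
      ↔
      (∃ T : Head d n k → Head d n k,
        (IsTM d n k T ∧ ∃ T' : Head d n k → Head d n k,
          IsTM d n k T' ∧ T ∘ T' = id ∧ T' ∘ T = id) ∧
        (∀ p : Xnk d n k, (p : Amb d n k) ∈ Yset d n k → φ p = p) ∧
        ∀ c : Head d n k,
          φ ⟨embedHead d n k c, embedHead_mem d n k c⟩ =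
            ⟨embedHead d n k (T c), embedHead_mem d n k (T c)⟩)) := by
  constructor
  · intro φ
    constructor
    · rintro ⟨⟨hcont, hcomm⟩, hY, hpre⟩
      have hpre' : ∀ p : Xnk d n k,
          ((φ p : Xnk d n k) : Amb d n k) ∈ Yset d n k → (p : Amb d n k) ∈ Yset d n k := by
        intro p hp
        have := Set.ext_iff.1 hpre p
        exact this.1 hp
      obtain ⟨T, hTM, hembed⟩ := chl_main hn φ hcont hcomm hY hpre'
      exact ⟨T, hTM, hY, hembed⟩
    · rintro ⟨T, hTM, hY, hembed⟩
      have hphi : φ = PhiT T := phi_eq_PhiT φ T hY hembed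
      refine ⟨⟨?_, ?_⟩, hY, ?_⟩
      · rw [hphi]
        exact PhiT_continuous hn hTM
      · intro v p
        rw [hphi]
        exact PhiT_shift hTM v p
      · rw [hphi]
        exact Set.ext fun p => PhiT_Yset_iff T p
  · intro φ
    constructor
    · rintro ⟨⟨ψ, hcφ, hcψ, hcomφ, hcomψ, hφψ, hψφ⟩, hY⟩
      have hYψ : ∀ p : Xnk d n k, (p : Amb d n k) ∈ Yset d n k → ψ p = p := by
        intro p hp
        have h1 : ψ (φ p) = p := congrFun hψφ p
        rw [hY p hp] at h1
        exact h1
      have hpreφ : ∀ p : Xnk d n k,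
          ((φ p : Xnk d n k) : Amb d n k) ∈ Yset d n k → (p : Amb d n k) ∈ Yset d n k := by
        intro p hp
        have h1 : ψ (φ p) = φ p := hYψ _ hp
        have h2 : ψ (φ p) = p := congrFun hψφ p
        rw [h2] at h1
        rw [h1]
        exact hp
      have hpreψ : ∀ p : Xnk d n k,
          ((ψ p : Xnk d n k) : Amb d n k) ∈ Yset d n k → (p : Amb d n k) ∈ Yset d n k := by
        intro p hp
        have h1 : φ (ψ p) = ψ p := hY _ hp
        have h2 : φ (ψ p) = p := congrFun hφψ p
        rw [h2] at h1
        rw [h1]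
        exact hp
      obtain ⟨T, hTM, hTembed⟩ := chl_main hn φ hcφ hcomφ hY hpreφ
      obtain ⟨T', hTM', hTembed'⟩ := chl_main hn ψ hcψ hcomψ hYψ hpreψ
      refine ⟨T, ⟨hTM, T', hTM', ?_, ?_⟩, hY, hTembed⟩
      · funext c
        have h1 := hTembed' c
        have h3 : φ (ψ ⟨embedHead d n k c, embedHead_mem d n k c⟩) =
            ⟨embedHead d n k c, embedHead_mem d n k c⟩ := congrFun hφψ _
        rw [h1, hTembed (T' c)] at h3
        exact embedHead_injective (congrArg Subtype.val h3)
      · funext c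
        have h1 := hTembed c
        have h3 : ψ (φ ⟨embedHead d n k c, embedHead_mem d n k c⟩) =
            ⟨embedHead d n k c, embedHead_mem d n k c⟩ := congrFun hψφ _
        rw [h1, hTembed' (T c)] at h3
        exact embedHead_injective (congrArg Subtype.val h3)
    · rintro ⟨T, ⟨hTM, T', hTM', hTT', hT'T⟩, hY, hembed⟩
      have hphi : φ = PhiT T := phi_eq_PhiT φ T hY hembed
      refine ⟨⟨PhiT T', ?_, PhiT_continuous hn hTM', ?_,
        fun v p => PhiT_shift hTM' v p, ?_, ?_⟩, hY⟩
      · rw [hphi]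
        exact PhiT_continuous hn hTM
      · intro v p
        rw [hphi]
        exact PhiT_shift hTM v p
      · rw [hphi]
        funext p
        show PhiT T (PhiT T' p) = p
        by_cases h : ∃ u, (p : Amb d n k).2 u ≠ 0
        · have hp : p = ⟨embedHead d n k (decodeH (p : Amb d n k) h),
              embedHead_mem d n k _⟩ := Subtype.ext (embed_decodeH p.2 h).symm
          rw [hp, PhiT_embed, PhiT_embed]
          have hc : T (T' (decodeH (p : Amb d n k) h)) = decodeH (p : Amb d n k) h :=
            congrFun hTT' _
          rw [hc]
        · rw [PhiT_of_headless T' p h, PhiT_of_headless T p h]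
      · rw [hphi]
        funext p
        show PhiT T' (PhiT T p) = p
        by_cases h : ∃ u, (p : Amb d n k).2 u ≠ 0
        · have hp : p = ⟨embedHead d n k (decodeH (p : Amb d n k) h),
              embedHead_mem d n k _⟩ := Subtype.ext (embed_decodeH p.2 h).symm
          rw [hp, PhiT_embed, PhiT_embed]
          have hc : T' (T (decodeH (p : Amb d n k) h)) = decodeH (p : Amb d n k) h :=
            congrFun hT'T _
          rw [hc]
        · rw [PhiT_of_headless T p h, PhiT_of_headless T' p h]
end

section
/- Let d, n, k ≥ 1 and let T be a moving-tape (ℤ^d,n,k)-Turing machine. The following are equivalent: (1) T is injective; (2) T is surjective; (3) T has a moving-tape inverse, i.e. T ∈ RTM_fix(ℤ^d,n,k); (4) μ(T^{−1}(A)) = μ(A) for every Borel set A ⊆ Σ^{ℤ^d} × Q; (5) μ(T(A)) = μ(A) for every Borel set A ⊆ Σ^{ℤ^d} × Q. -/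
set_option linter.unusedSectionVars false


open MeasureTheory

/-- The moving-tape space `Σ^{ℤ^d} × Q`. -/
abbrev Tape (d n k : ℕ) : Type := ((Fin d → ℤ) → Fin n) × Fin k

/-- `T` is a moving-tape `(ℤ^d,n,k)`-Turing machine. -/
def IsTapeTM (d n k : ℕ) (T : Tape d n k → Tape d n k) : Prop :=
  ∃ (Fi Fo : Finset (Fin d → ℤ))
    (f : Tape d n k → ((Fin d → ℤ) → Fin n) × Fin k × (Fin d → ℤ)),
    (∀ (x y : (Fin d → ℤ) → Fin n) (q : Fin k),
        (∀ u ∈ Fi, x u = y u) → f (x, q) = f (y, q)) ∧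
    ∀ (x : (Fin d → ℤ) → Fin n) (q : Fin k),
      T (x, q) =
        (shiftC (-(f (x, q)).2.2) (fun u => if u ∈ Fo then (f (x, q)).1 u else x u),
         (f (x, q)).2.1)

namespace TTM

variable {d n k : ℕ}

def cylSet (F : Finset (Fin d → ℤ)) (p : (Fin d → ℤ) → Fin n) (q : Fin k) :
    Set (Tape d n k) :=
  {y | (∀ u ∈ F, y.1 u = p u) ∧ y.2 = q}

lemma isOpen_cylSet (F : Finset (Fin d → ℤ)) (p : (Fin d → ℤ) → Fin n) (q : Fin k) :
    IsOpen (cylSet F p q) := by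
  have hcont : Continuous (fun y : Tape d n k => ((fun u : ↥F => y.1 u), y.2)) :=
    Continuous.prodMk
      (continuous_pi fun u => (continuous_apply (u : Fin d → ℤ)).comp continuous_fst)
      continuous_snd
  have : cylSet F p q =
      (fun y : Tape d n k => ((fun u : ↥F => y.1 u), y.2)) ⁻¹' {((fun u : ↥F => p u), q)} := by
    ext y
    simp only [cylSet, Set.mem_setOf_eq, Set.mem_preimage, Set.mem_singleton_iff,
      Prod.ext_iff, funext_iff, Subtype.forall]
  rw [this]
  exact (isOpen_discrete _).preimage hcont

lemma measurableSet_cylSet (F : Finset (Fin d → ℤ)) (p : (Fin d → ℤ) → Fin n) (q : Fin k) :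
    MeasurableSet[borel (Tape d n k)] (cylSet F p q) :=
  MeasurableSpace.measurableSet_generateFrom (isOpen_cylSet F p q)

def cylFamily (d n k : ℕ) : Set (Set (Tape d n k)) :=
  {A | ∃ F p q, A = cylSet F p q}

lemma isPiSystem_cylFamily : IsPiSystem (cylFamily d n k) := by
  rintro s ⟨F, p, q, rfl⟩ t ⟨F2, p2, q2, rfl⟩ ⟨y, ⟨hy1, hy2⟩, ⟨hy3, hy4⟩⟩
  have hq : q2 = q := hy4.symm.trans hy2
  refine ⟨F ∪ F2, fun u => if u ∈ F then p u else p2 u, q, ?_⟩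
  ext z
  constructor
  · rintro ⟨⟨hz1, hz2⟩, ⟨hz3, _⟩⟩
    refine ⟨fun u hu => ?_, hz2⟩
    by_cases h : u ∈ F
    · simpa [h] using hz1 u h
    · have : u ∈ F2 := by
        rcases Finset.mem_union.mp hu with h2 | h2
        · exact absurd h2 h
        · exact h2
      simpa [h] using hz3 u this
  · rintro ⟨hz1, hz2⟩
    refine ⟨⟨fun u hu => ?_, hz2⟩, ⟨fun u hu => ?_, hz2.trans hq.symm⟩⟩
    · simpa [hu] using hz1 u (Finset.mem_union_left _ hu)
    · by_cases h : u ∈ F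
      · have hpu : p u = p2 u := (hy1 u h).symm.trans (hy3 u hu)
        simpa [h, hpu] using hz1 u (Finset.mem_union_left _ h)
      · simpa [h] using hz1 u (Finset.mem_union_right _ hu)

lemma borel_eq_generateFrom_cylFamily (hn : 1 ≤ n) :
    borel (Tape d n k) = MeasurableSpace.generateFrom (cylFamily d n k) := by
  apply le_antisymm
  · rw [borel]
    apply MeasurableSpace.generateFrom_le
    intro U hU
    -- U open : countable union of cylinders
    set P := (F : Finset (Fin d → ℤ)) × ((↥F → Fin n) × Fin k) with hP
    let ext : (F : Finset (Fin d → ℤ)) → (↥F → Fin n) → (Fin d → ℤ) → Fin n :=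
      fun F a u => if h : u ∈ F then a ⟨u, h⟩ else ⟨0, hn⟩
    let toSet : P → Set (Tape d n k) := fun c => cylSet c.1 (ext c.1 c.2.1) c.2.2
    have hcover : U = ⋃ c ∈ {c : P | toSet c ⊆ U}, toSet c := by
      apply Set.Subset.antisymm
      · rintro ⟨x, q⟩ hx
        obtain ⟨A, B, hA, hB, hxA, hqB, hsub⟩ := isOpen_prod_iff.mp hU x q hx
        obtain ⟨I, u, hu, hIu⟩ := isOpen_pi_iff.mp hA x hxA
        have hmem : (⟨I, fun w : ↥I => x ↑w, q⟩ : P) ∈ {c : P | toSet c ⊆ U} := ?_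
        case _ =>
          exact Set.mem_biUnion hmem ⟨fun w hw => by simp [toSet, ext, cylSet, hw], rfl⟩
        intro z hz
        apply hsub
        obtain ⟨hz1, hz2⟩ := hz
        constructor
        · apply hIu
          intro a ha
          have ha2 : a ∈ I := ha
          rw [hz1 a ha2]
          simp only [ext, dif_pos ha2]
          exact (hu a ha2).2
        · simp only [hz2]; exact hqB
      · exact Set.iUnion₂_subset fun c hc => hc
    rw [hcover]
    refine MeasurableSet.biUnion (Set.to_countable _) ?_
    intro c _
    exact MeasurableSpace.measurableSet_generateFrom ⟨c.1, ext c.1 c.2.1, c.2.2, rfl⟩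
  · exact MeasurableSpace.generateFrom_le (by rintro s ⟨F, p, q, rfl⟩; exact measurableSet_cylSet F p q)

lemma cyl_base_ne_top' (n k c : ℕ) : ((n : ENNReal) ^ c * (k : ENNReal)) ≠ ⊤ :=
  ENNReal.mul_ne_top (ENNReal.pow_ne_top (ENNReal.natCast_ne_top n)) (ENNReal.natCast_ne_top k)

lemma cyl_base_ne_zero' {n k : ℕ} (hn : 1 ≤ n) (hk : 1 ≤ k) (c : ℕ) :
    ((n : ENNReal) ^ c * (k : ENNReal)) ≠ 0 := by
  have h1 : (n : ENNReal) ≠ 0 := Nat.cast_ne_zero.mpr (Nat.one_le_iff_ne_zero.mp hn)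
  have h2 : (k : ENNReal) ≠ 0 := Nat.cast_ne_zero.mpr (Nat.one_le_iff_ne_zero.mp hk)
  exact mul_ne_zero (pow_ne_zero _ h1) h2

section Meas
variable (hn : 1 ≤ n) (hk : 1 ≤ k)
variable (μ : @Measure (Tape d n k) (borel (Tape d n k)))
variable (hμ : ∀ (F : Finset (Fin d → ℤ)) (p : (Fin d → ℤ) → Fin n) (q : Fin k),
    μ (cylSet F p q) = 1 / ((n : ENNReal) ^ F.card * (k : ENNReal)))

include hn hk hμ

lemma measure_cylSet_ne_zero (F : Finset (Fin d → ℤ)) (p : (Fin d → ℤ) → Fin n) (q : Fin k) :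
    μ (cylSet F p q) ≠ 0 := by
  rw [hμ, one_div]
  exact ENNReal.inv_ne_zero.mpr (cyl_base_ne_top' n k F.card)

lemma measure_cylSet_ne_top (F : Finset (Fin d → ℤ)) (p : (Fin d → ℤ) → Fin n) (q : Fin k) :
    μ (cylSet F p q) ≠ ⊤ := by
  rw [hμ, one_div]
  exact ENNReal.inv_ne_top.mpr (cyl_base_ne_zero' hn hk F.card)

lemma measure_univ_eq_one : μ Set.univ = 1 := by
  have hcover : (Set.univ : Set (Tape d n k)) =
      ⋃ q ∈ (Finset.univ : Finset (Fin k)), cylSet ∅ (fun _ => ⟨0, hn⟩) q := by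
    ext z
    simp [cylSet]
  rw [hcover, measure_biUnion_finset]
  · rw [Finset.sum_congr rfl (fun q _ => hμ ∅ _ q)]
    simp only [Finset.card_empty, pow_zero, one_mul, Finset.sum_const, Finset.card_univ,
      Fintype.card_fin, nsmul_eq_mul, one_div]
    rw [ENNReal.mul_inv_cancel]
    · exact Nat.cast_ne_zero.mpr (Nat.one_le_iff_ne_zero.mp hk)
    · exact ENNReal.natCast_ne_top k
  · intro q1 _ q2 _ hne
    simp only [Function.onFun, Set.disjoint_left]
    rintro z ⟨_, h1⟩ ⟨_, h2⟩
    exact hne (h1.symm.trans h2)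
  · intro q _
    exact measurableSet_cylSet ∅ _ q

end Meas

structure NormTM (d n k : ℕ) (T : Tape d n k → Tape d n k) where
  E : Finset (Fin d → ℤ)
  pat : Tape d n k → (Fin d → ℤ) → Fin n
  st  : Tape d n k → Fin k
  vec : Tape d n k → (Fin d → ℤ)
  loc : ∀ z w : Tape d n k, z.2 = w.2 → (∀ u ∈ E, z.1 u = w.1 u) →
      pat z = pat w ∧ st z = st w ∧ vec z = vec w
  eq : ∀ z : Tape d n k,
      T z = (shiftC (-(vec z)) (fun u => if u ∈ E then pat z u else z.1 u), st z)

lemma normTM_of_isTapeTM {T : Tape d n k → Tape d n k} (hn : 1 ≤ n)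
    (hT : IsTapeTM d n k T) : Nonempty (NormTM d n k T) := by
  obtain ⟨Fi, Fo, f, hf, hTeq⟩ := hT
  have hfz : ∀ z w : Tape d n k, z.2 = w.2 → (∀ u ∈ Fi, z.1 u = w.1 u) → f z = f w := by
    intro z w h2 h1
    have e1 : f z = f (z.1, z.2) := by rw [Prod.mk.eta]
    have e2 : f w = f (w.1, w.2) := by rw [Prod.mk.eta]
    rw [e1, e2, h2]
    exact hf z.1 w.1 w.2 h1
  refine ⟨⟨Fi ∪ Fo,
    (fun z u => if u ∈ Fo then (f z).1 u else if u ∈ Fi then z.1 u else ⟨0, hn⟩),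
    (fun z => (f z).2.1), (fun z => (f z).2.2), ?_, ?_⟩⟩
  · intro z w h2 h1
    have hfe : f z = f w := hfz z w h2 (fun u hu => h1 u (Finset.mem_union_left _ hu))
    refine ⟨?_, congrArg (fun r => r.2.1) hfe, congrArg (fun r => r.2.2) hfe⟩
    funext u
    by_cases h : u ∈ Fo
    · simp [h, hfe]
    · by_cases h' : u ∈ Fi
      · simp [h, h', h1 u (Finset.mem_union_left _ h')]
      · simp [h, h']
  · intro z
    have := hTeq z.1 z.2
    rw [Prod.mk.eta] at this
    rw [this]
    refine Prod.ext ?_ rfl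
    dsimp only
    refine congrArg (shiftC (-(f z).2.2)) ?_
    funext u
    by_cases h : u ∈ Fo
    · simp [h, Finset.mem_union]
    · by_cases h' : u ∈ Fi
      · simp [h, h', Finset.mem_union]
      · simp [h, h', Finset.mem_union]

section Machine

variable {T : Tape d n k → Tape d n k} (M : NormTM d n k T) (hn : 1 ≤ n)

/-- Index of cylinders adapted to the machine. -/
abbrev Idx (M : NormTM d n k T) : Type := (↥M.E → Fin n) × Fin k

def extA (a : ↥M.E → Fin n) : (Fin d → ℤ) → Fin n :=
  fun u => if h : u ∈ M.E then a ⟨u, h⟩ else ⟨0, hn⟩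

def base (i : Idx M) : Tape d n k := (extA M hn i.1, i.2)

def vA (i : Idx M) : Fin d → ℤ := M.vec (base M hn i)
def qA (i : Idx M) : Fin k := M.st (base M hn i)
def pA (i : Idx M) : (Fin d → ℤ) → Fin n := M.pat (base M hn i)

def Cc (i : Idx M) : Set (Tape d n k) := cylSet M.E (extA M hn i.1) i.2

def Dc (i : Idx M) : Set (Tape d n k) :=
  cylSet (M.E.image (fun u => u - vA M hn i)) (fun s => pA M hn i (s + vA M hn i)) (qA M hn i)

def idxOf (z : Tape d n k) : Idx M := ((fun u : ↥M.E => z.1 ↑u), z.2)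

lemma mem_Cc_self (z : Tape d n k) : z ∈ Cc M hn (idxOf M z) := by
  refine ⟨fun u hu => ?_, rfl⟩
  simp [extA, hu, idxOf]

lemma Cc_eq_of_mem {z : Tape d n k} {i j : Idx M} (hi : z ∈ Cc M hn i)
    (hj : z ∈ Cc M hn j) : i = j := by
  obtain ⟨hi1, hi2⟩ := hi
  obtain ⟨hj1, hj2⟩ := hj
  refine Prod.ext ?_ (hi2.symm.trans hj2)
  funext u
  have h1 := hi1 u u.2
  have h2 := hj1 u u.2
  rw [extA, dif_pos u.2] at h1 h2
  simp only [Subtype.coe_eta] at h1 h2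
  rw [← h1, ← h2]

lemma data_const {z : Tape d n k} {i : Idx M} (hz : z ∈ Cc M hn i) :
    M.pat z = pA M hn i ∧ M.st z = qA M hn i ∧ M.vec z = vA M hn i :=
  M.loc z (base M hn i) hz.2 hz.1

def Yi (i : Idx M) (z : Tape d n k) : (Fin d → ℤ) → Fin n :=
  fun s => if s ∈ M.E then pA M hn i s else z.1 s

lemma T_apply {z : Tape d n k} {i : Idx M} (hz : z ∈ Cc M hn i) :
    T z = ((fun u => Yi M hn i z (u + vA M hn i)), qA M hn i) := by
  obtain ⟨h1, h2, h3⟩ := data_const M hn hz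
  rw [M.eq z, h1, h2, h3]
  refine Prod.ext ?_ rfl
  funext u
  simp [shiftC, Yi, sub_neg_eq_add]

lemma mem_Dc_iff {z : Tape d n k} {i : Idx M} :
    z ∈ Dc M hn i ↔ (∀ u ∈ M.E, z.1 (u - vA M hn i) = pA M hn i u) ∧ z.2 = qA M hn i := by
  constructor
  · rintro ⟨h1, h2⟩
    refine ⟨fun u hu => ?_, h2⟩
    have := h1 (u - vA M hn i) (Finset.mem_image_of_mem _ hu)
    simpa [sub_add_cancel] using this
  · rintro ⟨h1, h2⟩
    refine ⟨fun s hs => ?_, h2⟩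
    obtain ⟨u, hu, rfl⟩ := Finset.mem_image.mp hs
    simpa [sub_add_cancel] using h1 u hu

lemma T_mem_Dc {z : Tape d n k} {i : Idx M} (hz : z ∈ Cc M hn i) :
    T z ∈ Dc M hn i := by
  rw [mem_Dc_iff, T_apply M hn hz]
  refine ⟨fun u hu => ?_, rfl⟩
  simp [Yi, sub_add_cancel, hu]

def Sc (i : Idx M) (z : Tape d n k) : Tape d n k :=
  ((fun u => if u ∈ M.E then extA M hn i.1 u else z.1 (u - vA M hn i)), i.2)

lemma Sc_mem (i : Idx M) (z : Tape d n k) : Sc M hn i z ∈ Cc M hn i :=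
  ⟨fun u hu => by simp [Sc, hu], rfl⟩

lemma T_Sc {z : Tape d n k} {i : Idx M} (hz : z ∈ Dc M hn i) :
    T (Sc M hn i z) = z := by
  rw [mem_Dc_iff] at hz
  rw [T_apply M hn (Sc_mem M hn i z)]
  refine Prod.ext ?_ hz.2.symm
  funext w
  by_cases h : w + vA M hn i ∈ M.E
  · have := hz.1 (w + vA M hn i) h
    rw [add_sub_cancel_right] at this
    simp [Yi, h, ← this]
  · simp [Yi, h, Sc, add_sub_cancel_right]

lemma Sc_T {z : Tape d n k} {i : Idx M} (hz : z ∈ Cc M hn i) :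
    Sc M hn i (T z) = z := by
  rw [T_apply M hn hz]
  refine Prod.ext ?_ hz.2.symm
  funext u
  by_cases h : u ∈ M.E
  · simp [Sc, h, (hz.1 u h).symm]
  · simp [Sc, h, Yi, sub_add_cancel]

lemma image_Cc (i : Idx M) : T '' Cc M hn i = Dc M hn i := by
  apply Set.Subset.antisymm
  · rintro z ⟨x, hx, rfl⟩
    exact T_mem_Dc M hn hx
  · intro z hz
    exact ⟨Sc M hn i z, Sc_mem M hn i z, T_Sc M hn hz⟩

end Machine

section Machine2

variable {T : Tape d n k → Tape d n k} (M : NormTM d n k T) (hn : 1 ≤ n)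

/-- Disjointness of the output cylinders. -/
def Dis : Prop := ∀ (i j : Idx M) (z : Tape d n k), z ∈ Dc M hn i → z ∈ Dc M hn j → i = j

/-- The output cylinders cover everything. -/
def Cov : Prop := ∀ z : Tape d n k, ∃ i : Idx M, z ∈ Dc M hn i

lemma injective_iff_dis : Function.Injective T ↔ Dis M hn := by
  constructor
  · intro hinj i j z hi hj
    have h1 : T (Sc M hn i z) = T (Sc M hn j z) := by rw [T_Sc M hn hi, T_Sc M hn hj]
    have h2 := hinj h1
    exact Cc_eq_of_mem M hn (h2 ▸ Sc_mem M hn i z) (Sc_mem M hn j z)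
  · intro hdis x y hxy
    have hij : idxOf M x = idxOf M y :=
      hdis _ _ (T x) (T_mem_Dc M hn (mem_Cc_self M hn x))
        (hxy ▸ T_mem_Dc M hn (mem_Cc_self M hn y))
    calc x = Sc M hn (idxOf M x) (T x) := (Sc_T M hn (mem_Cc_self M hn x)).symm
    _ = Sc M hn (idxOf M y) (T y) := by rw [hij, hxy]
    _ = y := Sc_T M hn (mem_Cc_self M hn y)

lemma surjective_iff_cov : Function.Surjective T ↔ Cov M hn := by
  constructor
  · intro hs z
    obtain ⟨x, rfl⟩ := hs z
    exact ⟨idxOf M x, T_mem_Dc M hn (mem_Cc_self M hn x)⟩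
  · intro hcov z
    obtain ⟨i, hi⟩ := hcov z
    exact ⟨Sc M hn i z, T_Sc M hn hi⟩

/-- Window determining membership in all `Dc`. -/
def Wd : Finset (Fin d → ℤ) :=
  Finset.univ.biUnion (fun i : Idx M => M.E.image (fun u => u - vA M hn i))

lemma Dc_det {z w : Tape d n k} (h1 : ∀ u ∈ Wd M hn, z.1 u = w.1 u) (h2 : z.2 = w.2)
    (i : Idx M) (hz : z ∈ Dc M hn i) : w ∈ Dc M hn i := by
  rw [mem_Dc_iff] at hz ⊢
  refine ⟨fun u hu => ?_, h2 ▸ hz.2⟩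
  rw [← h1 (u - vA M hn i) ?_]
  · exact hz.1 u hu
  · exact Finset.mem_biUnion.mpr ⟨i, Finset.mem_univ i, Finset.mem_image_of_mem _ hu⟩

def pointCyl (z : Tape d n k) : Set (Tape d n k) := cylSet (Wd M hn) z.1 z.2

lemma mem_pointCyl (z : Tape d n k) : z ∈ pointCyl M hn z := ⟨fun _ _ => rfl, rfl⟩

lemma pointCyl_subset {z : Tape d n k} {i : Idx M} (hz : z ∈ Dc M hn i) :
    pointCyl M hn z ⊆ Dc M hn i := by
  rintro w ⟨h1, h2⟩
  exact Dc_det M hn (fun u hu => (h1 u hu).symm) h2.symm i hz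

lemma pointCyl_mem_imp {z w : Tape d n k} (hw : w ∈ pointCyl M hn z) {i : Idx M}
    (hwi : w ∈ Dc M hn i) : z ∈ Dc M hn i :=
  Dc_det M hn (fun u hu => hw.1 u hu) hw.2 i hwi

section WithMeasure

variable (μ : @Measure (Tape d n k) (borel (Tape d n k)))
variable (hμ : ∀ (F : Finset (Fin d → ℤ)) (p : (Fin d → ℤ) → Fin n) (q : Fin k),
    μ (cylSet F p q) = 1 / ((n : ENNReal) ^ F.card * (k : ENNReal)))

lemma measurableSet_Dc (i : Idx M) : MeasurableSet[borel (Tape d n k)] (Dc M hn i) :=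
  measurableSet_cylSet _ _ _

include hμ

lemma measure_Dc (i : Idx M) :
    μ (Dc M hn i) = 1 / ((n : ENNReal) ^ M.E.card * (k : ENNReal)) := by
  rw [Dc, hμ, Finset.card_image_of_injective _ (sub_left_injective)]

lemma sum_measure_Dc (hk : 1 ≤ k) :
    ∑ i : Idx M, μ (Dc M hn i) = 1 := by
  rw [Finset.sum_congr rfl (fun i _ => measure_Dc M hn μ hμ i)]
  rw [Finset.sum_const, Finset.card_univ]
  have hcard : Fintype.card (Idx M) = n ^ M.E.card * k := by
    rw [Fintype.card_prod, Fintype.card_fun, Fintype.card_coe, Fintype.card_fin,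
      Fintype.card_fin]
  rw [hcard, nsmul_eq_mul, one_div]
  push_cast
  exact ENNReal.mul_inv_cancel (cyl_base_ne_zero' hn hk _) (cyl_base_ne_top' n k _)

lemma dis_imp_cov (hk : 1 ≤ k) (hdis : Dis M hn) : Cov M hn := by
  by_contra hcon
  unfold Cov at hcon
  push_neg at hcon
  obtain ⟨z, hz⟩ := hcon
  have hdisj : ((Finset.univ : Finset (Idx M)) : Set (Idx M)).PairwiseDisjoint (Dc M hn) := by
    intro i _ j _ hij
    simp only [Function.onFun, Set.disjoint_left]
    intro w hwi hwj
    exact hij (hdis i j w hwi hwj)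
  have hU : μ (⋃ i ∈ (Finset.univ : Finset (Idx M)), Dc M hn i) = 1 := by
    rw [measure_biUnion_finset hdisj (fun i _ => measurableSet_Dc M hn i)]
    simpa using sum_measure_Dc M hn μ hμ hk
  have hdisj2 : Disjoint (⋃ i ∈ (Finset.univ : Finset (Idx M)), Dc M hn i)
      (pointCyl M hn z) := by
    simp only [Set.disjoint_left, Set.mem_iUnion]
    rintro w ⟨i, _, hwi⟩ hwp
    exact hz i (pointCyl_mem_imp M hn hwp hwi)
  have hmeas : μ ((⋃ i ∈ (Finset.univ : Finset (Idx M)), Dc M hn i) ∪ pointCyl M hn z)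
      = 1 + μ (pointCyl M hn z) := by
    rw [measure_union hdisj2 (measurableSet_cylSet _ _ _), hU]
  have hle : (1 : ENNReal) + μ (pointCyl M hn z) ≤ 1 := by
    rw [← hmeas, ← measure_univ_eq_one hn hk μ hμ]
    exact measure_mono (Set.subset_univ _)
  have : μ (pointCyl M hn z) = 0 := by
    have h10 : (1 : ENNReal) + μ (pointCyl M hn z) ≤ 1 + 0 := by simpa using hle
    have := (ENNReal.add_le_add_iff_left (by norm_num : (1:ENNReal) ≠ ⊤)).mp h10
    simpa using this
  exact measure_cylSet_ne_zero hn hk μ hμ _ _ _ this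

lemma cov_imp_dis (hk : 1 ≤ k) (hcov : Cov M hn) : Dis M hn := by
  intro i j z hzi hzj
  by_contra hij
  have hpos : μ (Dc M hn i ∩ Dc M hn j) ≠ 0 := by
    intro h0
    refine measure_cylSet_ne_zero hn hk μ hμ (Wd M hn) z.1 z.2 ?_
    refine measure_mono_null ?_ h0
    intro w hw
    exact ⟨pointCyl_subset M hn hzi hw, pointCyl_subset M hn hzj hw⟩
  -- cover bound
  have hsplit : (Set.univ : Set (Tape d n k)) ⊆
      (Dc M hn i \ Dc M hn j) ∪ (Dc M hn j ∪
        ⋃ l ∈ ((Finset.univ : Finset (Idx M)).erase i).erase j, Dc M hn l) := by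
    intro w _
    obtain ⟨l, hl⟩ := hcov w
    by_cases hwj : w ∈ Dc M hn j
    · exact Or.inr (Or.inl hwj)
    · by_cases hli : l = i
      · exact Or.inl ⟨hli ▸ hl, hwj⟩
      · have hlj : l ≠ j := fun h => hwj (h ▸ hl)
        refine Or.inr (Or.inr ?_)
        exact Set.mem_biUnion (Finset.mem_erase.mpr ⟨hlj, Finset.mem_erase.mpr
          ⟨hli, Finset.mem_univ l⟩⟩) hl
  have hbound : (1 : ENNReal) ≤ μ (Dc M hn i \ Dc M hn j) + (μ (Dc M hn j) +
      ∑ l ∈ ((Finset.univ : Finset (Idx M)).erase i).erase j, μ (Dc M hn l)) := by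
    calc (1 : ENNReal) = μ Set.univ := (measure_univ_eq_one hn hk μ hμ).symm
    _ ≤ μ ((Dc M hn i \ Dc M hn j) ∪ (Dc M hn j ∪
        ⋃ l ∈ ((Finset.univ : Finset (Idx M)).erase i).erase j, Dc M hn l)) :=
      measure_mono hsplit
    _ ≤ μ (Dc M hn i \ Dc M hn j) + μ (Dc M hn j ∪
        ⋃ l ∈ ((Finset.univ : Finset (Idx M)).erase i).erase j, Dc M hn l) :=
      measure_union_le _ _
    _ ≤ μ (Dc M hn i \ Dc M hn j) + (μ (Dc M hn j) +
        μ (⋃ l ∈ ((Finset.univ : Finset (Idx M)).erase i).erase j, Dc M hn l)) :=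
      add_le_add_right (measure_union_le _ _) _
    _ ≤ _ :=
      add_le_add_right (add_le_add_right (measure_biUnion_finset_le _ _) _) _
  have hkey : (1 : ENNReal) + μ (Dc M hn i ∩ Dc M hn j) ≤ 1 := by
    have hdiff : μ (Dc M hn i \ Dc M hn j) + μ (Dc M hn i ∩ Dc M hn j) = μ (Dc M hn i) :=
      measure_diff_add_inter _ (measurableSet_Dc M hn j)
    calc (1 : ENNReal) + μ (Dc M hn i ∩ Dc M hn j)
        ≤ (μ (Dc M hn i \ Dc M hn j) + (μ (Dc M hn j) +
          ∑ l ∈ ((Finset.univ : Finset (Idx M)).erase i).erase j, μ (Dc M hn l)))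
          + μ (Dc M hn i ∩ Dc M hn j) := add_le_add_left hbound _
    _ = μ (Dc M hn i) + (μ (Dc M hn j) +
          ∑ l ∈ ((Finset.univ : Finset (Idx M)).erase i).erase j, μ (Dc M hn l)) := by
          rw [← hdiff]; ring
    _ = ∑ l : Idx M, μ (Dc M hn l) := by
          have e1 : ∑ l : Idx M, μ (Dc M hn l) = μ (Dc M hn i) +
              ∑ l ∈ (Finset.univ : Finset (Idx M)).erase i, μ (Dc M hn l) :=
            (Finset.add_sum_erase _ _ (Finset.mem_univ i)).symm
          have e2 : ∑ l ∈ (Finset.univ : Finset (Idx M)).erase i, μ (Dc M hn l) =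
              μ (Dc M hn j) + ∑ l ∈ ((Finset.univ : Finset (Idx M)).erase i).erase j,
                μ (Dc M hn l) :=
            (Finset.add_sum_erase _ _
              (Finset.mem_erase.mpr ⟨Ne.symm hij, Finset.mem_univ j⟩)).symm
          rw [e1, e2]
    _ = 1 := sum_measure_Dc M hn μ hμ hk
  have : μ (Dc M hn i ∩ Dc M hn j) = 0 := by
    have h10 : (1 : ENNReal) + μ (Dc M hn i ∩ Dc M hn j) ≤ 1 + 0 := by simpa using hkey
    have := (ENNReal.add_le_add_iff_left (by norm_num : (1:ENNReal) ≠ ⊤)).mp h10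
    simpa using this
  exact hpos this

end WithMeasure

end Machine2

section Machine3

variable {T : Tape d n k → Tape d n k} (M : NormTM d n k T) (hn : 1 ≤ n)

lemma reversible_of_dis_cov (hdis : Dis M hn) (hcov : Cov M hn) :
    ∃ T' : Tape d n k → Tape d n k, IsTapeTM d n k T' ∧ T ∘ T' = id ∧ T' ∘ T = id := by
  classical
  let sel : Tape d n k → Idx M := fun z => Classical.choose (hcov z)
  have hsel : ∀ z, z ∈ Dc M hn (sel z) := fun z => Classical.choose_spec (hcov z)
  let T' : Tape d n k → Tape d n k := fun z => Sc M hn (sel z) z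
  have hTT' : T ∘ T' = id := funext fun z => T_Sc M hn (hsel z)
  have hT'T : T' ∘ T = id := by
    funext x
    have h1 : T x ∈ Dc M hn (idxOf M x) := T_mem_Dc M hn (mem_Cc_self M hn x)
    have h2 : sel (T x) = idxOf M x := hdis _ _ (T x) (hsel (T x)) h1
    show Sc M hn (sel (T x)) (T x) = x
    rw [h2]
    exact Sc_T M hn (mem_Cc_self M hn x)
  let Pz : Tape d n k → (Fin d → ℤ) → Fin n := fun z s =>
    if s + vA M hn (sel z) ∈ M.E then extA M hn (sel z).1 (s + vA M hn (sel z))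
    else if s ∈ Wd M hn then z.1 s else ⟨0, hn⟩
  refine ⟨T', ⟨Wd M hn, Wd M hn,
    fun z => (Pz z, (sel z).2, -(vA M hn (sel z))), ?_, ?_⟩, hTT', hT'T⟩
  · intro x y qq hagree
    have hseq : sel (x, qq) = sel (y, qq) := by
      have h1 : (y, qq) ∈ Dc M hn (sel (x, qq)) :=
        Dc_det M hn (z := (x, qq)) (w := (y, qq)) (fun u hu => hagree u hu) rfl _
          (hsel (x, qq))
      exact hdis _ _ (y, qq) h1 (hsel (y, qq))
    have hP : Pz (x, qq) = Pz (y, qq) := by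
      funext s
      simp only [Pz, hseq]
      by_cases h1 : s + vA M hn (sel (y, qq)) ∈ M.E
      · simp [h1]
      · by_cases h2 : s ∈ Wd M hn
        · simp [h1, h2, hagree s h2]
        · simp [h1, h2]
    simp only [Prod.mk.injEq]
    exact ⟨hP, by rw [hseq], by rw [hseq]⟩
  · intro x qq
    set i := sel (x, qq) with hi
    show Sc M hn i (x, qq) = _
    refine Prod.ext ?_ rfl
    funext u
    have hnn : - -vA M hn i = vA M hn i := neg_neg _
    simp only [Sc, shiftC, hnn]
    have hsv : u - vA M hn i + vA M hn i = u := sub_add_cancel _ _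
    by_cases h : u ∈ M.E
    · have hW : u - vA M hn i ∈ Wd M hn :=
        Finset.mem_biUnion.mpr ⟨i, Finset.mem_univ i, Finset.mem_image_of_mem _ h⟩
      simp [h, hW, Pz, hsv, ← hi]
    · by_cases hW : u - vA M hn i ∈ Wd M hn
      · simp [h, hW, Pz, hsv, ← hi]
      · simp [h, hW, Pz, hsv, ← hi]

end Machine3

lemma continuous_of_isTapeTM (hn : 1 ≤ n) {g : Tape d n k → Tape d n k}
    (hg : IsTapeTM d n k g) : Continuous g := by
  obtain ⟨M⟩ := normTM_of_isTapeTM hn hg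
  rw [continuous_iff_continuousAt]
  intro z
  set i := idxOf M z with hi
  have hopen : IsOpen (Cc M hn i) := isOpen_cylSet _ _ _
  have hz : z ∈ Cc M hn i := mem_Cc_self M hn z
  have hG : Continuous (fun w : Tape d n k =>
      ((fun u => Yi M hn i w (u + vA M hn i)), qA M hn i)) := by
    refine Continuous.prodMk ?_ continuous_const
    refine continuous_pi fun u => ?_
    by_cases h : u + vA M hn i ∈ M.E
    · simpa [Yi, h] using (continuous_const :
        Continuous fun _ : Tape d n k => pA M hn i (u + vA M hn i))
    · simpa [Yi, h, Function.comp_def] using (continuous_apply (u + vA M hn i)).comp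
        (continuous_fst : Continuous fun w : Tape d n k => w.1)
  refine ContinuousAt.congr hG.continuousAt ?_
  filter_upwards [hopen.mem_nhds hz] with w hw
  exact (T_apply M hn hw).symm

lemma measurable_of_isTapeTM (hn : 1 ≤ n) {g : Tape d n k → Tape d n k}
    (hg : IsTapeTM d n k g) :
    @Measurable (Tape d n k) (Tape d n k) (borel _) (borel _) g :=
  (continuous_of_isTapeTM hn hg).borel_measurable

section CylComp

variable {T : Tape d n k → Tape d n k} (M : NormTM d n k T) (hn : 1 ≤ n)
variable (F : Finset (Fin d → ℤ)) (p : (Fin d → ℤ) → Fin n) (q : Fin k)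

def F2 (i : Idx M) : Finset (Fin d → ℤ) := F.filter (fun u => u + vA M hn i ∉ M.E)

def PredI (i : Idx M) : Prop :=
  qA M hn i = q ∧ ∀ u ∈ F, u + vA M hn i ∈ M.E → pA M hn i (u + vA M hn i) = p u

lemma T_mem_cyl_iff {z : Tape d n k} {i : Idx M} (hz : z ∈ Cc M hn i) :
    T z ∈ cylSet F p q ↔
      (∀ u ∈ F, Yi M hn i z (u + vA M hn i) = p u) ∧ qA M hn i = q := by
  rw [T_apply M hn hz]
  exact Iff.rfl

lemma inter1_of_pred (i : Idx M) (h : PredI M hn F p q i) :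
    Cc M hn i ∩ T ⁻¹' (cylSet F p q) =
      cylSet (M.E ∪ (F2 M hn F i).image (fun u => u + vA M hn i))
        (fun s => if s ∈ M.E then extA M hn i.1 s else p (s - vA M hn i)) i.2 := by
  ext z
  constructor
  · rintro ⟨hzC, hzT⟩
    have hT := (T_mem_cyl_iff M hn F p q hzC).mp hzT
    refine ⟨fun s hs => ?_, hzC.2⟩
    dsimp only
    rcases Finset.mem_union.mp hs with hsE | hsF
    · rw [if_pos hsE]
      exact hzC.1 s hsE
    · obtain ⟨u, hu, rfl⟩ := Finset.mem_image.mp hsF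
      obtain ⟨huF, huE⟩ := Finset.mem_filter.mp hu
      rw [if_neg huE]
      have h1 := hT.1 u huF
      simp only [Yi, if_neg huE] at h1
      rw [add_sub_cancel_right]
      exact h1
  · rintro ⟨hz1, hz2⟩
    have hzC : z ∈ Cc M hn i := by
      refine ⟨fun u hu => ?_, hz2⟩
      have := hz1 u (Finset.mem_union_left _ hu)
      dsimp only at this
      rwa [if_pos hu] at this
    refine ⟨hzC, ?_⟩
    refine (T_mem_cyl_iff M hn F p q hzC).mpr ⟨fun u hu => ?_, h.1⟩
    by_cases hE : u + vA M hn i ∈ M.E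
    · simp only [Yi, if_pos hE]
      exact h.2 u hu hE
    · simp only [Yi, if_neg hE]
      have hmem : u + vA M hn i ∈ (F2 M hn F i).image (fun u => u + vA M hn i) :=
        Finset.mem_image_of_mem _ (Finset.mem_filter.mpr ⟨hu, hE⟩)
      have := hz1 _ (Finset.mem_union_right _ hmem)
      dsimp only at this
      rw [if_neg hE, add_sub_cancel_right] at this
      exact this

lemma inter1_of_not (i : Idx M) (h : ¬ PredI M hn F p q i) :
    Cc M hn i ∩ T ⁻¹' (cylSet F p q) = ∅ := by
  rw [Set.eq_empty_iff_forall_notMem]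
  rintro z ⟨hzC, hzT⟩
  have hT := (T_mem_cyl_iff M hn F p q hzC).mp hzT
  refine h ⟨hT.2, fun u hu hE => ?_⟩
  have h1 := hT.1 u hu
  simpa only [Yi, if_pos hE] using h1

lemma inter2_of_pred (i : Idx M) (h : PredI M hn F p q i) :
    cylSet F p q ∩ Dc M hn i =
      cylSet ((M.E.image (fun u => u - vA M hn i)) ∪ F2 M hn F i)
        (fun s => if s ∈ M.E.image (fun u => u - vA M hn i) then pA M hn i (s + vA M hn i)
          else p s) q := by
  ext z
  constructor
  · rintro ⟨⟨hzF, hzq⟩, hzD⟩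
    rw [mem_Dc_iff] at hzD
    refine ⟨fun s hs => ?_, hzq⟩
    dsimp only
    by_cases hsI : s ∈ M.E.image (fun u => u - vA M hn i)
    · rw [if_pos hsI]
      obtain ⟨u, hu, rfl⟩ := Finset.mem_image.mp hsI
      rw [sub_add_cancel]
      exact hzD.1 u hu
    · rw [if_neg hsI]
      rcases Finset.mem_union.mp hs with h1 | h1
      · exact absurd h1 hsI
      · exact hzF s (Finset.mem_filter.mp h1).1
  · rintro ⟨hz1, hz2⟩
    have hzD : z ∈ Dc M hn i := by
      rw [mem_Dc_iff]
      refine ⟨fun u hu => ?_, hz2.trans h.1.symm⟩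
      have hsI : u - vA M hn i ∈ M.E.image (fun u => u - vA M hn i) :=
        Finset.mem_image_of_mem _ hu
      have := hz1 _ (Finset.mem_union_left _ hsI)
      dsimp only at this
      rw [if_pos hsI, sub_add_cancel] at this
      exact this
    refine ⟨⟨fun u hu => ?_, hz2⟩, hzD⟩
    by_cases hE : u + vA M hn i ∈ M.E
    · have hsI : u ∈ M.E.image (fun w => w - vA M hn i) :=
        Finset.mem_image.mpr ⟨u + vA M hn i, hE, by rw [add_sub_cancel_right]⟩
      have := hz1 u (Finset.mem_union_left _ hsI)
      dsimp only at this
      rw [if_pos hsI] at this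
      rw [this]
      exact h.2 u hu hE
    · have hmem : u ∈ F2 M hn F i := Finset.mem_filter.mpr ⟨hu, hE⟩
      have hsI : u ∉ M.E.image (fun w => w - vA M hn i) := by
        intro hc
        obtain ⟨w, hw, rfl⟩ := Finset.mem_image.mp hc
        apply hE
        rw [sub_add_cancel]
        exact hw
      have := hz1 u (Finset.mem_union_right _ hmem)
      dsimp only at this
      rw [if_neg hsI] at this
      exact this

lemma inter2_of_not (i : Idx M) (h : ¬ PredI M hn F p q i) :
    cylSet F p q ∩ Dc M hn i = ∅ := by
  rw [Set.eq_empty_iff_forall_notMem]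
  rintro z ⟨⟨hzF, hzq⟩, hzD⟩
  rw [mem_Dc_iff] at hzD
  refine h ⟨hzD.2.symm.trans hzq, fun u hu hE => ?_⟩
  have h1 := hzD.1 (u + vA M hn i) hE
  rw [add_sub_cancel_right] at h1
  rw [← h1]
  exact hzF u hu

lemma card1 (i : Idx M) :
    (M.E ∪ (F2 M hn F i).image (fun u => u + vA M hn i)).card
      = M.E.card + (F2 M hn F i).card := by
  rw [Finset.card_union_of_disjoint, Finset.card_image_of_injective _ (add_left_injective _)]
  rw [Finset.disjoint_left]
  intro s hsE hsF
  obtain ⟨u, hu, rfl⟩ := Finset.mem_image.mp hsF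
  exact (Finset.mem_filter.mp hu).2 hsE

lemma card2 (i : Idx M) :
    ((M.E.image (fun u => u - vA M hn i)) ∪ F2 M hn F i).card
      = M.E.card + (F2 M hn F i).card := by
  rw [Finset.card_union_of_disjoint, Finset.card_image_of_injective _ sub_left_injective]
  rw [Finset.disjoint_left]
  intro s hsI hsF
  obtain ⟨w, hw, rfl⟩ := Finset.mem_image.mp hsI
  apply (Finset.mem_filter.mp hsF).2
  rw [sub_add_cancel]
  exact hw

variable (μ : @Measure (Tape d n k) (borel (Tape d n k)))
variable (hμ : ∀ (F : Finset (Fin d → ℤ)) (p : (Fin d → ℤ) → Fin n) (q : Fin k),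
    μ (cylSet F p q) = 1 / ((n : ENNReal) ^ F.card * (k : ENNReal)))

include hμ

lemma measure_inter_eq (i : Idx M) :
    μ (Cc M hn i ∩ T ⁻¹' (cylSet F p q)) = μ (cylSet F p q ∩ Dc M hn i) := by
  by_cases h : PredI M hn F p q i
  · rw [inter1_of_pred M hn F p q i h, inter2_of_pred M hn F p q i h, hμ, hμ,
      card1 M hn F i, card2 M hn F i]
  · rw [inter1_of_not M hn F p q i h, inter2_of_not M hn F p q i h]

lemma measure_preimage_cylSet (hdis : Dis M hn) (hcov : Cov M hn) :
    μ (T ⁻¹' cylSet F p q) = μ (cylSet F p q) := by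
  classical
  have hd1 : T ⁻¹' cylSet F p q =
      ⋃ i ∈ (Finset.univ : Finset (Idx M)), (Cc M hn i ∩ T ⁻¹' cylSet F p q) := by
    apply Set.Subset.antisymm
    · intro z hz
      exact Set.mem_biUnion (Finset.mem_univ (idxOf M z)) ⟨mem_Cc_self M hn z, hz⟩
    · exact Set.iUnion₂_subset fun i _ => Set.inter_subset_right
  have hd2 : cylSet F p q =
      ⋃ i ∈ (Finset.univ : Finset (Idx M)), (cylSet F p q ∩ Dc M hn i) := by
    apply Set.Subset.antisymm
    · intro z hz
      obtain ⟨i, hi⟩ := hcov z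
      exact Set.mem_biUnion (Finset.mem_univ i) ⟨hz, hi⟩
    · exact Set.iUnion₂_subset fun i _ => Set.inter_subset_left
  have hm1 : ∀ i ∈ (Finset.univ : Finset (Idx M)),
      MeasurableSet[borel (Tape d n k)] (Cc M hn i ∩ T ⁻¹' cylSet F p q) := by
    intro i _
    by_cases h : PredI M hn F p q i
    · rw [inter1_of_pred M hn F p q i h]
      exact measurableSet_cylSet _ _ _
    · rw [inter1_of_not M hn F p q i h]
      exact @MeasurableSet.empty _ (borel (Tape d n k))
  have hm2 : ∀ i ∈ (Finset.univ : Finset (Idx M)),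
      MeasurableSet[borel (Tape d n k)] (cylSet F p q ∩ Dc M hn i) := by
    intro i _
    by_cases h : PredI M hn F p q i
    · rw [inter2_of_pred M hn F p q i h]
      exact measurableSet_cylSet _ _ _
    · rw [inter2_of_not M hn F p q i h]
      exact @MeasurableSet.empty _ (borel (Tape d n k))
  have hdj1 : ((Finset.univ : Finset (Idx M)) : Set (Idx M)).PairwiseDisjoint
      (fun i => Cc M hn i ∩ T ⁻¹' cylSet F p q) := by
    intro i _ j _ hij
    simp only [Function.onFun, Set.disjoint_left]
    rintro z ⟨hzi, _⟩ ⟨hzj, _⟩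
    exact hij (Cc_eq_of_mem M hn hzi hzj)
  have hdj2 : ((Finset.univ : Finset (Idx M)) : Set (Idx M)).PairwiseDisjoint
      (fun i => cylSet F p q ∩ Dc M hn i) := by
    intro i _ j _ hij
    simp only [Function.onFun, Set.disjoint_left]
    rintro z ⟨_, hzi⟩ ⟨_, hzj⟩
    exact hij (hdis i j z hzi hzj)
  conv_lhs => rw [hd1]
  conv_rhs => rw [hd2]
  rw [measure_biUnion_finset hdj1 hm1, measure_biUnion_finset hdj2 hm2]
  exact Finset.sum_congr rfl fun i _ => measure_inter_eq M hn F p q μ hμ i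

end CylComp

end TTM

/-- For a moving-tape `(ℤ^d,n,k)`-Turing machine `T`, the following
are equivalent: (1) `T` is injective; (2) `T` is surjective; (3) `T` has a moving-tape
inverse (i.e. `T ∈ RTM_fix(ℤ^d,n,k)`); (4) `μ (T⁻¹ A) = μ A` for every Borel set `A`;
(5) `μ (T '' A) = μ A` for every Borel set `A`.  Here `μ` is the uniform measure on
`Σ^{ℤ^d} × Q`: the unique Borel probability measure giving each cylinder
`[p] × {q}` (with `p` a pattern of finite support `F`) measure `1 / (n^|F| · k)`. -/
theorem tapeTM_injective_surjective_reversible_measure_tfae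
    (d n k : ℕ) (hd : 1 ≤ d) (hn : 1 ≤ n) (hk : 1 ≤ k)
    (μ : @Measure (Tape d n k) (borel (Tape d n k)))
    (hμ : ∀ (F : Finset (Fin d → ℤ)) (p : (Fin d → ℤ) → Fin n) (q : Fin k),
        μ {y : Tape d n k | (∀ u ∈ F, y.1 u = p u) ∧ y.2 = q} =
          1 / ((n : ENNReal) ^ F.card * (k : ENNReal)))
    (T : Tape d n k → Tape d n k) (hT : IsTapeTM d n k T) :
    List.TFAE
      [ Function.Injective T,
        Function.Surjective T,
        (∃ T' : Tape d n k → Tape d n k, IsTapeTM d n k T' ∧ T ∘ T' = id ∧ T' ∘ T = id),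
        (∀ A : Set (Tape d n k), MeasurableSet[borel (Tape d n k)] A → μ (T ⁻¹' A) = μ A),
        (∀ A : Set (Tape d n k), MeasurableSet[borel (Tape d n k)] A → μ (T '' A) = μ A) ] := by
  classical
  have hμ' : ∀ (F : Finset (Fin d → ℤ)) (p : (Fin d → ℤ) → Fin n) (q : Fin k),
      μ (TTM.cylSet F p q) = 1 / ((n : ENNReal) ^ F.card * (k : ENNReal)) := hμ
  obtain ⟨M⟩ := TTM.normTM_of_isTapeTM hn hT
  have hTm : @Measurable (Tape d n k) (Tape d n k) (borel _) (borel _) T :=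
    TTM.measurable_of_isTapeTM hn hT
  -- basic equivalences
  have e12 : Function.Injective T → Function.Surjective T := by
    intro h1
    exact (TTM.surjective_iff_cov M hn).mpr
      (TTM.dis_imp_cov M hn μ hμ' hk ((TTM.injective_iff_dis M hn).mp h1))
  have e21 : Function.Surjective T → Function.Injective T := by
    intro h2
    exact (TTM.injective_iff_dis M hn).mpr
      (TTM.cov_imp_dis M hn μ hμ' hk ((TTM.surjective_iff_cov M hn).mp h2))
  have e13 : Function.Injective T →
      ∃ T' : Tape d n k → Tape d n k, IsTapeTM d n k T' ∧ T ∘ T' = id ∧ T' ∘ T = id := by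
    intro h1
    have hdis := (TTM.injective_iff_dis M hn).mp h1
    exact TTM.reversible_of_dis_cov M hn hdis (TTM.dis_imp_cov M hn μ hμ' hk hdis)
  have e31 : (∃ T' : Tape d n k → Tape d n k,
      IsTapeTM d n k T' ∧ T ∘ T' = id ∧ T' ∘ T = id) → Function.Injective T := by
    rintro ⟨T', _, _, hT'T⟩
    exact Function.LeftInverse.injective (g := T') (fun x => congrFun hT'T x)
  have e14 : Function.Injective T →
      ∀ A : Set (Tape d n k), MeasurableSet[borel (Tape d n k)] A → μ (T ⁻¹' A) = μ A := by
    intro h1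
    have hdis := (TTM.injective_iff_dis M hn).mp h1
    have hcov := TTM.dis_imp_cov M hn μ hμ' hk hdis
    haveI hfin : @IsFiniteMeasure _ (borel _) μ :=
      @IsFiniteMeasure.mk _ (borel _) μ
        (by rw [TTM.measure_univ_eq_one hn hk μ hμ']; exact ENNReal.one_lt_top)
    have hmap : @Measure.map _ _ (borel _) (borel _) T μ = μ := by
      haveI hfin2 : @IsFiniteMeasure _ (borel _) (@Measure.map _ _ (borel _) (borel _) T μ) := by
        refine @IsFiniteMeasure.mk _ (borel _) _ ?_
        rw [@Measure.map_apply _ _ (borel _) (borel _) μ T hTm _ MeasurableSet.univ]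
        exact (measure_mono (Set.subset_univ _)).trans_lt
          (by rw [TTM.measure_univ_eq_one hn hk μ hμ']; exact ENNReal.one_lt_top)
      refine @MeasureTheory.ext_of_generate_finite _ (borel _)
        (@Measure.map _ _ (borel _) (borel _) T μ) μ (TTM.cylFamily d n k)
        (TTM.borel_eq_generateFrom_cylFamily hn) TTM.isPiSystem_cylFamily hfin2 ?_ ?_
      · rintro s ⟨F, pp, qq, rfl⟩
        rw [@Measure.map_apply _ _ (borel _) (borel _) μ T hTm _
          (TTM.measurableSet_cylSet F pp qq)]
        exact TTM.measure_preimage_cylSet M hn F pp qq μ hμ' hdis hcov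
      · rw [@Measure.map_apply _ _ (borel _) (borel _) μ T hTm _ MeasurableSet.univ]
        rw [Set.preimage_univ]
    intro A hA
    calc μ (T ⁻¹' A) = (@Measure.map _ _ (borel _) (borel _) T μ) A :=
          (@Measure.map_apply _ _ (borel _) (borel _) μ T hTm _ hA).symm
    _ = μ A := by rw [hmap]
  have e42 : (∀ A : Set (Tape d n k), MeasurableSet[borel (Tape d n k)] A →
      μ (T ⁻¹' A) = μ A) → Function.Surjective T := by
    intro h4
    by_contra hns
    have hncov : ¬ TTM.Cov M hn := fun hc => hns ((TTM.surjective_iff_cov M hn).mpr hc)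
    unfold TTM.Cov at hncov
    push_neg at hncov
    obtain ⟨z, hz⟩ := hncov
    have hpre : T ⁻¹' (TTM.pointCyl M hn z) = ∅ := by
      rw [Set.eq_empty_iff_forall_notMem]
      intro x hx
      exact hz (TTM.idxOf M x)
        (TTM.pointCyl_mem_imp M hn hx (TTM.T_mem_Dc M hn (TTM.mem_Cc_self M hn x)))
    have := h4 (TTM.pointCyl M hn z) (TTM.measurableSet_cylSet _ _ _)
    rw [hpre] at this
    exact TTM.measure_cylSet_ne_zero hn hk μ hμ' _ _ _ (by simpa [TTM.pointCyl] using this.symm)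
  have e15 : Function.Injective T →
      ∀ A : Set (Tape d n k), MeasurableSet[borel (Tape d n k)] A → μ (T '' A) = μ A := by
    intro h1
    obtain ⟨T', hT'tm, hTT', hT'T⟩ := e13 h1
    have h4 := e14 h1
    have hT'm : @Measurable (Tape d n k) (Tape d n k) (borel _) (borel _) T' :=
      TTM.measurable_of_isTapeTM hn hT'tm
    intro A hA
    have himg : T '' A = T' ⁻¹' A := by
      ext z
      constructor
      · rintro ⟨x, hx, rfl⟩
        show T' (T x) ∈ A
        rw [show T' (T x) = x from congrFun hT'T x]
        exact hx
      · intro hz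
        exact ⟨T' z, hz, congrFun hTT' z⟩
    have hA' : MeasurableSet[borel (Tape d n k)] (T' ⁻¹' A) := hT'm hA
    calc μ (T '' A) = μ (T' ⁻¹' A) := by rw [himg]
    _ = μ (T ⁻¹' (T' ⁻¹' A)) := (h4 _ hA').symm
    _ = μ A := by rw [← Set.preimage_comp, hT'T, Set.preimage_id]
  have e52 : (∀ A : Set (Tape d n k), MeasurableSet[borel (Tape d n k)] A →
      μ (T '' A) = μ A) → Function.Surjective T := by
    intro h5
    by_contra hns
    have hncov : ¬ TTM.Cov M hn := fun hc => hns ((TTM.surjective_iff_cov M hn).mpr hc)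
    unfold TTM.Cov at hncov
    push_neg at hncov
    obtain ⟨z, hz⟩ := hncov
    have h1 := h5 Set.univ (@MeasurableSet.univ _ (borel (Tape d n k)))
    rw [Set.image_univ, TTM.measure_univ_eq_one hn hk μ hμ'] at h1
    have hsub : Set.range T ⊆ (TTM.pointCyl M hn z)ᶜ := by
      rintro w ⟨x, rfl⟩ hw
      exact hz (TTM.idxOf M x)
        (TTM.pointCyl_mem_imp M hn hw (TTM.T_mem_Dc M hn (TTM.mem_Cc_self M hn x)))
    have hlt : μ ((TTM.pointCyl M hn z)ᶜ) < 1 := by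
      rw [TTM.pointCyl]
      rw [measure_compl (TTM.measurableSet_cylSet _ _ _)
        (TTM.measure_cylSet_ne_top hn hk μ hμ' _ _ _),
        TTM.measure_univ_eq_one hn hk μ hμ']
      exact ENNReal.sub_lt_self (by norm_num) (by norm_num)
        (TTM.measure_cylSet_ne_zero hn hk μ hμ' _ _ _)
    have : (1 : ENNReal) < 1 := by
      calc (1 : ENNReal) = μ (Set.range T) := h1.symm
      _ ≤ μ ((TTM.pointCyl M hn z)ᶜ) := measure_mono hsub
      _ < 1 := hlt
    exact absurd this (lt_irrefl _)
  tfae_have 1 → 2 := e12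
  tfae_have 2 → 1 := e21
  tfae_have 1 → 3 := e13
  tfae_have 3 → 1 := e31
  tfae_have 1 → 4 := e14
  tfae_have 4 → 2 := e42
  tfae_have 1 → 5 := e15
  tfae_have 5 → 2 := e52
  tfae_finish
end

section
/- Let d, n, k ≥ 1, Σ = Fin n, Q = Fin k. A function T : Σ^{ℤ^d} × Q → Σ^{ℤ^d} × Q is a moving-tape (ℤ^d,n,k)-Turing machine if and only if T is continuous and there exist a continuous function s : Σ^{ℤ^d} × Q → ℤ^d and a finite set F ⊂ ℤ^d such that for all (x,q), the configurations T_1(x,q) and σ^{s(x,q)}(x) agree on ℤ^d ∖ F (where T_1 denotes the first component of T). -/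
/-- A function of two variables, the second from a discrete space, is continuous
if all its slices are. -/
lemma cont_of_discrete_snd {X Y Z : Type*} [TopologicalSpace X] [TopologicalSpace Y]
    [DiscreteTopology Y] [TopologicalSpace Z] (g : X × Y → Z)
    (hg : ∀ y, Continuous fun x => g (x, y)) : Continuous g := by
  rw [continuous_def]
  intro U hU
  have hset : g ⁻¹' U = ⋃ y : Y, ((fun x => g (x, y)) ⁻¹' U) ×ˢ ({y} : Set Y) := by
    ext ⟨x, y⟩
    constructor
    · intro hmem
      exact Set.mem_iUnion.mpr ⟨y, Set.mem_prod.mpr ⟨hmem, rfl⟩⟩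
    · intro hmem
      obtain ⟨y', hy'⟩ := Set.mem_iUnion.mp hmem
      obtain ⟨h1, h2⟩ := Set.mem_prod.mp hy'
      cases h2
      exact h1
  rw [hset]
  exact isOpen_iUnion fun y => (((hg y).isOpen_preimage U hU).prod (isOpen_discrete _))

/-- A function of two variables, the first from a discrete space, is continuous
if all its slices are. -/
lemma cont_of_discrete_fst {X Y Z : Type*} [TopologicalSpace X] [TopologicalSpace Y]
    [DiscreteTopology X] [TopologicalSpace Z] (g : X × Y → Z)
    (hg : ∀ x, Continuous fun y => g (x, y)) : Continuous g := by
  have : g = (fun p : Y × X => g (p.2, p.1)) ∘ Prod.swap := rfl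
  rw [this]
  exact (cont_of_discrete_snd _ hg).comp continuous_swap

/-- A continuous function from a compact product of finite discrete spaces to a
discrete space depends only on finitely many coordinates. -/
lemma exists_finset_local {ι A B : Type*} [TopologicalSpace A] [DiscreteTopology A]
    [Finite A] [TopologicalSpace B] [DiscreteTopology B]
    (h : (ι → A) → B) (hc : Continuous h) :
    ∃ E : Finset ι, ∀ x y : ι → A, (∀ u ∈ E, x u = y u) → h x = h y := by
  classical
  have hU : ∀ x : ι → A, IsOpen (h ⁻¹' {h x}) :=
    fun x => (isOpen_discrete _).preimage hc
  have key : ∀ x : ι → A, ∃ I : Finset ι,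
      {y : ι → A | ∀ i ∈ I, y i = x i} ⊆ h ⁻¹' {h x} := by
    intro x
    obtain ⟨I, u, hu, hsub⟩ := isOpen_pi_iff.mp (hU x) x (Set.mem_singleton _)
    refine ⟨I, fun y hy => hsub ?_⟩
    intro i hi
    rw [hy i hi]
    exact (hu i hi).2
  choose I hI using key
  have hcyl : ∀ x : ι → A, IsOpen {y : ι → A | ∀ i ∈ I x, y i = x i} := by
    intro x
    have : {y : ι → A | ∀ i ∈ I x, y i = x i}
        = (I x : Set ι).pi (fun i => ({x i} : Set A)) := by
      ext y; simp [Set.mem_pi]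
    rw [this]
    exact isOpen_set_pi (I x).finite_toSet (fun i _ => isOpen_discrete _)
  obtain ⟨t, ht⟩ := isCompact_univ.elim_finite_subcover
    (fun x : ι → A => {y : ι → A | ∀ i ∈ I x, y i = x i}) hcyl
    (fun y _ => Set.mem_iUnion.mpr ⟨y, fun i _ => rfl⟩)
  refine ⟨t.biUnion I, ?_⟩
  intro x y hxy
  have hx := ht (Set.mem_univ x)
  simp only [Set.mem_iUnion] at hx
  obtain ⟨z, hz, hxz⟩ := hx
  have hyz : ∀ i ∈ I z, y i = z i := fun i hi =>
    ((hxy i (Finset.mem_biUnion.mpr ⟨z, hz, hi⟩)).symm).trans (hxz i hi)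
  exact (hI z hxz).trans (hI z hyz).symm

/-- Variant of `exists_finset_local` with an extra finite parameter. -/
lemma exists_finset_local_prod {ι A Q B : Type*} [TopologicalSpace A] [DiscreteTopology A]
    [Finite A] [TopologicalSpace B] [DiscreteTopology B] [TopologicalSpace Q] [Fintype Q]
    (h : (ι → A) × Q → B) (hc : Continuous h) :
    ∃ E : Finset ι, ∀ (x y : ι → A) (q : Q), (∀ u ∈ E, x u = y u) → h (x, q) = h (y, q) := by
  classical
  choose E hE using fun q : Q =>
    exists_finset_local (fun x => h (x, q)) (hc.comp (continuous_id.prodMk continuous_const))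
  refine ⟨Finset.univ.biUnion E, fun x y q hxy => hE q x y ?_⟩
  intro u hu
  exact hxy u (Finset.mem_biUnion.mpr ⟨q, Finset.mem_univ q, hu⟩)

/-- A function `T : Σ^{ℤ^d} × Q → Σ^{ℤ^d} × Q` is a moving-tape
`(ℤ^d,n,k)`-Turing machine if and only if it is continuous and there exist a
continuous function `s : Σ^{ℤ^d} × Q → ℤ^d` and a finite set `F ⊆ ℤ^d` such that
for all `(x,q)`, the configurations `T₁(x,q)` and `σ^{s(x,q)} x` agree on `ℤ^d ∖ F`. -/
theorem movingTape_iff_continuous_with_shift_indicator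
    (d n k : ℕ) (hd : 1 ≤ d) (hn : 1 ≤ n) (hk : 1 ≤ k)
    (T : Tape d n k → Tape d n k) :
    IsTapeTM d n k T ↔
      (Continuous T ∧
        ∃ s : Tape d n k → (Fin d → ℤ), Continuous s ∧
          ∃ F : Finset (Fin d → ℤ),
            ∀ (x : (Fin d → ℤ) → Fin n) (q : Fin k), ∀ u ∉ F,
              (T (x, q)).1 u = shiftC (s (x, q)) x u) := by
  have d0 : Fin n := ⟨0, hn⟩
  constructor
  · rintro ⟨Fi, Fo, f, hloc, hT⟩
    -- factor `f` through the restriction to `Fi`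
    set r : Tape d n k → (↥Fi → Fin n) × Fin k :=
      fun p => (fun i => p.1 (i : Fin d → ℤ), p.2) with hr
    set g : (↥Fi → Fin n) × Fin k → ((Fin d → ℤ) → Fin n) × Fin k × (Fin d → ℤ) :=
      fun c => f (fun u => if h : u ∈ Fi then c.1 ⟨u, h⟩ else d0, c.2) with hg
    have hfg : ∀ p : Tape d n k, f p = g (r p) := by
      rintro ⟨x, q⟩
      exact hloc x _ q (fun u hu => by simp [dif_pos hu]; rfl)
    have rcont : Continuous r := by
      rw [hr]
      refine Continuous.prodMk (continuous_pi fun i => ?_) continuous_snd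
      show Continuous fun p : Tape d n k => p.1 (i : Fin d → ℤ)
      exact (continuous_apply ((i : Fin d → ℤ))).comp continuous_fst
    -- explicit coordinatewise form of T
    have hTform : T = fun p : Tape d n k =>
        ((fun u => if u + (g (r p)).2.2 ∈ Fo then (g (r p)).1 (u + (g (r p)).2.2)
            else p.1 (u + (g (r p)).2.2)),
          (g (r p)).2.1) := by
      funext p
      obtain ⟨x, q⟩ := p
      rw [hT x q]
      have hfr : f (x, q) = g (r (x, q)) := hfg (x, q)
      rw [hfr]
      refine Prod.ext ?_ rfl
      funext u
      simp [shiftC, sub_neg_eq_add]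
    refine ⟨?_, fun p => -(g (r p)).2.2, ?_, ?_⟩
    rotate_left
    · show Continuous ((fun c : (↥Fi → Fin n) × Fin k => -(g c).2.2) ∘ r)
      exact continuous_of_discreteTopology.comp rcont
    rotate_right
    · rw [hTform]
      refine Continuous.prodMk ?_ ?_
      rotate_left
      · show Continuous ((fun c : (↥Fi → Fin n) × Fin k => (g c).2.1) ∘ r)
        exact continuous_of_discreteTopology.comp rcont
      rotate_right
      refine continuous_pi fun u => ?_
      have : (fun p : Tape d n k =>
          if u + (g (r p)).2.2 ∈ Fo then (g (r p)).1 (u + (g (r p)).2.2)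
            else p.1 (u + (g (r p)).2.2)) =
          (fun c : ((↥Fi → Fin n) × Fin k) × ((Fin d → ℤ) → Fin n) =>
            if u + (g c.1).2.2 ∈ Fo then (g c.1).1 (u + (g c.1).2.2)
              else c.2 (u + (g c.1).2.2)) ∘ (fun p => (r p, p.1)) := rfl
      rw [this]
      refine Continuous.comp ?_ (rcont.prodMk continuous_fst)
      refine cont_of_discrete_fst _ (fun c1 => ?_)
      by_cases hmem : u + (g c1).2.2 ∈ Fo
      · simp only [if_pos hmem]; exact continuous_const
      · simp only [if_neg hmem]; exact continuous_apply _
    · -- the indicator set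
      refine ⟨((Set.finite_range fun c => (g c).2.2).toFinset).biUnion
          (fun v => Fo.image (fun w => w - v)), ?_⟩
      intro x q u hu
      set v : Fin d → ℤ := (g (r (x, q))).2.2 with hv
      have hfr : f (x, q) = g (r (x, q)) := hfg (x, q)
      have hnotin : u + v ∉ Fo := by
        intro hmem
        refine hu (Finset.mem_biUnion.mpr ⟨v, ?_, Finset.mem_image.mpr
          ⟨u + v, hmem, add_sub_cancel_right u v⟩⟩)
        simp [Set.Finite.mem_toFinset]
        exact ⟨(r (x, q)).1, (r (x, q)).2, hv.symm⟩
      rw [hT x q]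
      simp only [hfr, ← hv, shiftC, sub_neg_eq_add, if_neg hnotin]
  · rintro ⟨hTc, s, hs, F, hF⟩
    -- finite range of s
    have hSfin : (Set.range s).Finite :=
      ((IsLocallyConstant.iff_continuous s).mpr hs).range_finite
    set S : Finset (Fin d → ℤ) := hSfin.toFinset with hS
    set Fo : Finset (Fin d → ℤ) := S.biUnion (fun v => F.image (fun w => w - v)) with hFo
    set f : Tape d n k → ((Fin d → ℤ) → Fin n) × Fin k × (Fin d → ℤ) :=
      fun p => (fun w => if _ : w ∈ Fo then (T p).1 (w + s p) else d0, (T p).2, -(s p))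
      with hf
    -- the discrete-valued data determining f
    set h : Tape d n k → (↥Fo → Fin n) × Fin k × (Fin d → ℤ) :=
      fun p => (fun w => (T p).1 ((w : Fin d → ℤ) + s p), (T p).2, s p) with hh
    have hhc : Continuous h := by
      refine Continuous.prodMk ?_ (Continuous.prodMk (continuous_snd.comp hTc) hs)
      refine continuous_pi fun w => ?_
      have : (fun p : Tape d n k => (T p).1 ((w : Fin d → ℤ) + s p)) =
          (fun z : ((Fin d → ℤ) → Fin n) × (Fin d → ℤ) => z.1 ((w : Fin d → ℤ) + z.2)) ∘
            (fun p => ((T p).1, s p)) := rfl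
      rw [this]
      refine Continuous.comp ?_ ((continuous_fst.comp hTc).prodMk hs)
      refine cont_of_discrete_snd _ (fun y => ?_)
      show Continuous fun z : (Fin d → ℤ) → Fin n => z ((w : Fin d → ℤ) + y)
      exact continuous_apply _
    obtain ⟨Fi, hFi⟩ := exists_finset_local_prod h hhc
    have hfh : ∀ p : Tape d n k, f p =
        (fun w => if hw : w ∈ Fo then (h p).1 ⟨w, hw⟩ else d0, (h p).2.1, -(h p).2.2) := by
      intro p; rfl
    refine ⟨Fi, Fo, f, ?_, ?_⟩
    · intro x y q hxy
      rw [hfh (x, q), hfh (y, q), hFi x y q hxy]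
    · intro x q
      have hsnd : (f (x, q)).2.1 = (T (x, q)).2 := rfl
      have hneg : -(f (x, q)).2.2 = s (x, q) := neg_neg _
      refine Prod.ext ?_ hsnd.symm
      rw [hneg]
      funext u
      show (T (x, q)).1 u =
        (if u - s (x, q) ∈ Fo then (f (x, q)).1 (u - s (x, q)) else x (u - s (x, q)))
      by_cases hmem : u - s (x, q) ∈ Fo
      · rw [if_pos hmem]
        have : (f (x, q)).1 (u - s (x, q)) = (T (x, q)).1 (u - s (x, q) + s (x, q)) := by
          simp only [hf, dif_pos hmem]
        rw [this, sub_add_cancel]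
      · rw [if_neg hmem]
        have huF : u ∉ F := by
          intro huF
          exact hmem (Finset.mem_biUnion.mpr ⟨s (x, q),
            by simp [hS, Set.Finite.mem_toFinset], Finset.mem_image.mpr ⟨u, huF, rfl⟩⟩)
        exact hF x q u huF
end

section
/- Let d, n, k ≥ 1, Σ = Fin n, Q = Fin k, and let X ⊆ Σ^{ℤ^d} be a strongly locally aperiodic subshift. Let TM(X,k) denote the monoid of restrictions to X × Q × ℤ^d of moving-head (ℤ^d,n,k)-Turing machines mapping X × Q × ℤ^d into itself, and RTM(X,k) its group of invertible elements. Then the map Ψ, defined by Ψ(T)(x,q) = (σ^{−v}(y), r) whenever T(x,q,0) = (y,r,v), is injective on TM(X,k): if T, T′ ∈ TM(X,k) satisfy Ψ(T)(x,q) = Ψ(T′)(x,q) for all (x,q) ∈ X × Q, then T = T′ on X × Q × ℤ^d. Consequently Ψ induces a monoid isomorphism from TM(X,k) onto its image TM_fix(X,k) and a group isomorphism from RTM(X,k) onto RTM_fix(X,k). -/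
/-- The canonical map `Ψ` sending a moving-head machine to its moving-tape version:
`Ψ(T)(x,q) = (σ^{-v} y, r)` whenever `T (x,q,0) = (y,r,v)`. -/
def Psi (d n k : ℕ) (T : Head d n k → Head d n k) :
    ((Fin d → ℤ) → Fin n) × Fin k → ((Fin d → ℤ) → Fin n) × Fin k :=
  fun p =>
    (shiftC (-(T (p.1, p.2, 0)).2.2) (T (p.1, p.2, 0)).1, (T (p.1, p.2, 0)).2.1)

/-- A subshift: a closed shift-invariant set of configurations. -/
def IsSubshift (d n : ℕ) (X : Set ((Fin d → ℤ) → Fin n)) : Prop :=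
  IsClosed X ∧ ∀ (v : Fin d → ℤ), ∀ x ∈ X, shiftC v x ∈ X

/-- `X` is strongly locally aperiodic. -/
def StronglyLocallyAperiodic (d n : ℕ) (X : Set ((Fin d → ℤ) → Fin n)) : Prop :=
  ∀ x ∈ X, ∀ F : Finset (Fin d → ℤ), ∀ v : Fin d → ℤ, v ≠ 0 →
    ∃ y ∈ X, (∀ u ∈ F, y u = x u) ∧
      ∃ u : Fin d → ℤ, u ∉ F ∧ u + v ∉ F ∧ y u ≠ y (u + v)

/-- Let `X ⊆ Σ^{ℤ^d}` be a strongly locally aperiodic subshift and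
let `T, T'` be moving-head `(ℤ^d,n,k)`-Turing machines mapping `X × Q × ℤ^d` into
itself.  If `Ψ(T)` and `Ψ(T')` agree on `X × Q`, then `T = T'` on `X × Q × ℤ^d`;
hence `Ψ` induces a monoid isomorphism of `TM(X,k)` onto `TM_fix(X,k)` and a group
isomorphism of `RTM(X,k)` onto `RTM_fix(X,k)`. -/
theorem Psi_injective_on_stronglyLocallyAperiodic
    (d n k : ℕ) (hd : 1 ≤ d) (hn : 1 ≤ n) (hk : 1 ≤ k)
    (X : Set ((Fin d → ℤ) → Fin n))
    (hX : IsSubshift d n X) (hap : StronglyLocallyAperiodic d n X)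
    (T T' : Head d n k → Head d n k)
    (hT : IsTM d n k T) (hT' : IsTM d n k T')
    (hTX : ∀ x ∈ X, ∀ (q : Fin k) (v : Fin d → ℤ), (T (x, q, v)).1 ∈ X)
    (hT'X : ∀ x ∈ X, ∀ (q : Fin k) (v : Fin d → ℤ), (T' (x, q, v)).1 ∈ X)
    (hPsi : ∀ x ∈ X, ∀ q : Fin k, Psi d n k T (x, q) = Psi d n k T' (x, q)) :
    ∀ x ∈ X, ∀ (q : Fin k) (v : Fin d → ℤ), T (x, q, v) = T' (x, q, v) := by
  obtain ⟨Fi, Fo, f, hf, hTeq⟩ := hT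
  obtain ⟨Gi, Go, g, hg, hT'eq⟩ := hT'
  have hs0 : ∀ z : (Fin d → ℤ) → Fin n, shiftC (-(0 : Fin d → ℤ)) z = z := by
    intro z; funext u; simp [shiftC]
  have hT0 : ∀ (z : (Fin d → ℤ) → Fin n) (q : Fin k),
      T (z, q, 0) = ((fun u => if u ∈ Fo then (f (z, q)).1 u else z u),
        (f (z, q)).2.1, (f (z, q)).2.2) := by
    intro z q
    rw [hTeq, hs0]
    simp
  have hT'0 : ∀ (z : (Fin d → ℤ) → Fin n) (q : Fin k),
      T' (z, q, 0) = ((fun u => if u ∈ Go then (g (z, q)).1 u else z u),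
        (g (z, q)).2.1, (g (z, q)).2.2) := by
    intro z q
    rw [hT'eq, hs0]
    simp
  -- consequence of the Psi hypothesis, unfolded
  have hPsi' : ∀ z ∈ X, ∀ q : Fin k,
      (f (z, q)).2.1 = (g (z, q)).2.1 ∧
      ∀ t : Fin d → ℤ,
        (if t + (f (z, q)).2.2 ∈ Fo then (f (z, q)).1 (t + (f (z, q)).2.2)
          else z (t + (f (z, q)).2.2))
        = (if t + (g (z, q)).2.2 ∈ Go then (g (z, q)).1 (t + (g (z, q)).2.2)
          else z (t + (g (z, q)).2.2)) := by
    intro z hz q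
    have h := hPsi z hz q
    unfold Psi at h
    simp only at h
    rw [hT0, hT'0] at h
    simp only [Prod.mk.injEq] at h
    refine ⟨h.2, fun t => ?_⟩
    have h1 := congrFun h.1 t
    simp only [shiftC, sub_neg_eq_add] at h1
    exact h1
  have key : ∀ x ∈ X, ∀ q : Fin k, T (x, q, 0) = T' (x, q, 0) := by
    intro x hx q
    have hmain := hPsi' x hx q
    set v := (f (x, q)).2.2 with hvdef
    set v' := (g (x, q)).2.2 with hv'def
    have hv : v = v' := by
      by_contra hne
      have hw : v' - v ≠ 0 := sub_ne_zero.mpr (Ne.symm hne)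
      obtain ⟨z, hzX, hzF, u, hu, huw, hzne⟩ :=
        hap x hx (Fi ∪ Gi ∪ Fo ∪ Go) (v' - v) hw
      have hfz : f (z, q) = f (x, q) := by
        apply hf
        intro s hs
        exact hzF s (by simp [hs])
      have hgz : g (z, q) = g (x, q) := by
        apply hg
        intro s hs
        exact hzF s (by simp [hs])
      have h2 := (hPsi' z hzX q).2 (u - v)
      rw [hfz, hgz, ← hvdef, ← hv'def] at h2
      have e1 : u - v + v = u := by ring
      have e2 : u - v + v' = u + (v' - v) := by ring
      rw [e1, e2] at h2
      rw [if_neg, if_neg] at h2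
      · exact hzne h2
      · intro h; exact huw (by simp [h])
      · intro h; exact hu (by simp [h])
    have hfst : (fun u => if u ∈ Fo then (f (x, q)).1 u else x u)
        = (fun u => if u ∈ Go then (g (x, q)).1 u else x u) := by
      funext s
      have h := hmain.2 (s - v)
      rw [← hv] at h
      have e1 : s - v + v = s := by ring
      rw [e1] at h
      exact h
    rw [hT0, hT'0, hfst, hmain.1]
    have h3 : (f (x, q)).2.2 = (g (x, q)).2.2 := by
      rw [← hvdef, ← hv'def]; exact hv
    rw [h3]
  -- general head position via equivariance
  intro x hx q v
  have hx' : shiftC (-v) x ∈ X := hX.2 (-v) x hx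
  have keq := key (shiftC (-v) x) hx' q
  rw [hT0, hT'0] at keq
  simp only [Prod.mk.injEq] at keq
  rw [hTeq, hT'eq]
  simp only [Prod.mk.injEq]
  refine ⟨?_, keq.2.1, by rw [keq.2.2]⟩
  funext u
  have h := congrFun keq.1 (u - v)
  have hxx : shiftC (-v) x (u - v) = x u := by
    simp only [shiftC]
    congr 1
    ring
  rw [hxx] at h
  exact h
end

section
/- Let d ≥ 1, n ≥ 2, k ≥ 1. For all T_1, T_2 ∈ RTM_fix(ℤ^d,n,k) one has α(T_1 ∘ T_2) = α(T_1) + α(T_2); that is, the average movement α : RTM_fix(ℤ^d,n,k) → (ℚ^d, +) is a group homomorphism. -/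
open MeasureTheory

/-- `s` is a shift indicator of the moving-tape machine `T`: a continuous map such
that, for some finite `F ⊆ ℤ^d`, the tape `T₁(x,q)` agrees with `σ^{s(x,q)} x`
outside `F`.  (For `n ≥ 2` such an `s` is unique.) -/
def IsShiftIndicator (d n k : ℕ) (T : Tape d n k → Tape d n k)
    (s : Tape d n k → (Fin d → ℤ)) : Prop :=
  Continuous s ∧
    ∃ F : Finset (Fin d → ℤ),
      ∀ (x : (Fin d → ℤ) → Fin n) (q : Fin k), ∀ u ∉ F,
        (T (x, q)).1 u = shiftC (s (x, q)) x u

open Set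

namespace AvgMove

variable {d n k : ℕ}

def Cyl (E : Finset (Fin d → ℤ)) (p : (Fin d → ℤ) → Fin n) (q : Fin k) : Set (Tape d n k) :=
  {y | (∀ u ∈ E, y.1 u = p u) ∧ y.2 = q}

lemma cyl_isOpen (E : Finset (Fin d → ℤ)) (p : (Fin d → ℤ) → Fin n) (q : Fin k) :
    IsOpen (Cyl E p q) := by
  have h1 : Cyl E p q = (⋂ u ∈ E, {y : Tape d n k | y.1 u = p u}) ∩ {y | y.2 = q} := by
    ext y; simp [Cyl]
  rw [h1]
  refine IsOpen.inter (isOpen_biInter_finset fun u _ => ?_) ?_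
  · have h2 : {y : Tape d n k | y.1 u = p u} = (fun y : Tape d n k => y.1 u) ⁻¹' {p u} := rfl
    rw [h2]
    exact (isOpen_discrete _).preimage ((continuous_apply u).comp continuous_fst)
  · have h2 : {y : Tape d n k | y.2 = q} = (fun y : Tape d n k => y.2) ⁻¹' {q} := rfl
    rw [h2]
    exact (isOpen_discrete _).preimage continuous_snd

lemma exists_cyl_subset {U : Set (Tape d n k)} (hU : IsOpen U) {z : Tape d n k} (hz : z ∈ U) :
    ∃ E : Finset (Fin d → ℤ), Cyl E z.1 z.2 ⊆ U := by
  obtain ⟨x, q⟩ := z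
  have h1 : U ∈ nhds (x, q) := hU.mem_nhds hz
  rw [mem_nhds_prod_iff] at h1
  obtain ⟨u, hu, v, hv, huv⟩ := h1
  rw [nhds_pi, Filter.mem_pi] at hu
  obtain ⟨I, hIfin, t, ht, hsub⟩ := hu
  refine ⟨hIfin.toFinset, ?_⟩
  rintro ⟨y, r⟩ ⟨hy, hr⟩
  apply huv
  refine ⟨hsub fun i hi => ?_, ?_⟩
  · rw [hy i (hIfin.mem_toFinset.2 hi)]
    have h2 := ht i
    rwa [nhds_discrete, Filter.mem_pure] at h2
  · simp only at hr
    subst hr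
    rwa [nhds_discrete, Filter.mem_pure] at hv

lemma uniform_dep {s : Tape d n k → (Fin d → ℤ)} (hs : Continuous s) :
    ∃ E : Finset (Fin d → ℤ), ∀ (x y : (Fin d → ℤ) → Fin n) (q : Fin k),
      (∀ u ∈ E, x u = y u) → s (x, q) = s (y, q) := by
  have key : ∀ z : Tape d n k, ∃ E : Finset (Fin d → ℤ), Cyl E z.1 z.2 ⊆ s ⁻¹' {s z} := by
    intro z
    exact exists_cyl_subset (hs.isOpen_preimage _ (isOpen_discrete _)) rfl
  choose Ez hEz using key
  have hcover : (univ : Set (Tape d n k)) ⊆ ⋃ z : Tape d n k, Cyl (Ez z) z.1 z.2 := by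
    intro z _
    exact mem_iUnion.2 ⟨z, fun u _ => rfl, rfl⟩
  obtain ⟨t, ht⟩ := isCompact_univ.elim_finite_subcover _
    (fun z => cyl_isOpen (Ez z) z.1 z.2) hcover
  refine ⟨t.biUnion Ez, fun x y q hxy => ?_⟩
  have hx : (x, q) ∈ ⋃ z ∈ t, Cyl (Ez z) z.1 z.2 := ht (mem_univ _)
  simp only [mem_iUnion] at hx
  obtain ⟨z, hzt, hxz⟩ := hx
  have hsubE : ∀ u ∈ Ez z, u ∈ t.biUnion Ez := fun u hu => Finset.mem_biUnion.2 ⟨z, hzt, hu⟩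
  have hyz : (y, q) ∈ Cyl (Ez z) z.1 z.2 := by
    refine ⟨fun u hu => ?_, hxz.2⟩
    have := hxz.1 u hu
    simp only at this ⊢
    rw [← hxy u (hsubE u hu)]
    exact this
  have h1 := hEz z hxz
  have h2 := hEz z hyz
  simp only [mem_preimage, mem_singleton_iff] at h1 h2
  rw [h1, h2]


section TM
variable {T : Tape d n k → Tape d n k}
  {Fi Fo : Finset (Fin d → ℤ)}
  {f : Tape d n k → ((Fin d → ℤ) → Fin n) × Fin k × (Fin d → ℤ)}

lemma fo_subset_fi (hn : 2 ≤ n) (hk : 1 ≤ k) (hinj : Function.Injective T)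
    (hloc : ∀ (x y : (Fin d → ℤ) → Fin n) (q : Fin k),
        (∀ u ∈ Fi, x u = y u) → f (x, q) = f (y, q))
    (hT : ∀ (x : (Fin d → ℤ) → Fin n) (q : Fin k),
      T (x, q) =
        (shiftC (-(f (x, q)).2.2) (fun u => if u ∈ Fo then (f (x, q)).1 u else x u),
         (f (x, q)).2.1)) :
    Fo ⊆ Fi := by
  intro u₀ hu₀
  by_contra hni
  set x : (Fin d → ℤ) → Fin n := fun _ => ⟨0, by omega⟩ with hx
  set x' : (Fin d → ℤ) → Fin n := Function.update x u₀ ⟨1, by omega⟩ with hx'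
  set q : Fin k := ⟨0, hk⟩
  have hfeq : f (x, q) = f (x', q) := by
    refine hloc x x' q fun u hu => ?_
    rw [hx', Function.update_of_ne (fun h => hni (by rwa [h] at hu)) _ _]
  have hTeq : T (x, q) = T (x', q) := by
    rw [hT, hT, ← hfeq]
    congr 1
    funext w
    simp only [shiftC, sub_neg_eq_add]
    by_cases h : w + (f (x, q)).2.2 ∈ Fo
    · simp [h]
    · simp only [h, if_false]
      rw [hx', Function.update_of_ne (fun he => h (by rw [he]; exact hu₀)) _ _]
  have h1 := congrArg Prod.fst (hinj hTeq)
  have h0 : x u₀ = x' u₀ := congrFun h1 u₀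
  rw [hx', Function.update_self] at h0
  simp [hx] at h0

lemma image_cyl (hloc : ∀ (x y : (Fin d → ℤ) → Fin n) (q : Fin k),
        (∀ u ∈ Fi, x u = y u) → f (x, q) = f (y, q))
    (hT : ∀ (x : (Fin d → ℤ) → Fin n) (q : Fin k),
      T (x, q) =
        (shiftC (-(f (x, q)).2.2) (fun u => if u ∈ Fo then (f (x, q)).1 u else x u),
         (f (x, q)).2.1))
    (hFo : Fo ⊆ Fi) {E : Finset (Fin d → ℤ)} (hE : Fi ⊆ E)
    (p : (Fin d → ℤ) → Fin n) (q : Fin k) :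
    T '' Cyl E p q =
      Cyl (E.image (fun u => u - (f (p, q)).2.2))
        (fun w => if (w + (f (p, q)).2.2) ∈ Fo then (f (p, q)).1 (w + (f (p, q)).2.2)
                  else p (w + (f (p, q)).2.2))
        (f (p, q)).2.1 := by
  set v : Fin d → ℤ := (f (p, q)).2.2 with hv
  have hfp : ∀ x : (Fin d → ℤ) → Fin n, (∀ u ∈ E, x u = p u) → f (x, q) = f (p, q) :=
    fun x hx => hloc x p q fun u hu => hx u (hE hu)
  ext z
  constructor
  · rintro ⟨⟨x, q₀⟩, ⟨hxE, hq₀⟩, rfl⟩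
    simp only at hxE hq₀
    subst hq₀
    have hf := hfp x hxE
    rw [hT x q₀, hf]
    refine ⟨fun w hw => ?_, rfl⟩
    simp only [Finset.mem_image] at hw
    obtain ⟨u, huE, rfl⟩ := hw
    simp only [shiftC, sub_neg_eq_add, hv, sub_add_cancel]
    by_cases h : u ∈ Fo
    · simp [h]
    · simp only [h, if_false, hxE u huE]
  · rintro ⟨hzp, hz2⟩
    set x : (Fin d → ℤ) → Fin n := fun u => if u ∈ E then p u else z.1 (u - v) with hxdef
    have hxE : ∀ u ∈ E, x u = p u := fun u hu => if_pos hu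
    have hf := hfp x hxE
    refine ⟨(x, q), ⟨hxE, rfl⟩, ?_⟩
    rw [hT x q, hf]
    have hmain : ∀ u : Fin d → ℤ, u ∈ E → z.1 (u - v) = if u ∈ Fo then (f (p, q)).1 u else p u := by
      intro u hu
      have := hzp (u - v) (Finset.mem_image.2 ⟨u, hu, rfl⟩)
      simpa [sub_add_cancel] using this
    have h1 : shiftC (-v) (fun u => if u ∈ Fo then (f (p, q)).1 u else x u) = z.1 := by
      funext w
      simp only [shiftC, sub_neg_eq_add]
      have hw : w + v - v = w := add_sub_cancel_right w v
      by_cases h : w + v ∈ Fo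
      · have h2 := hmain (w + v) (hE (hFo h))
        rw [hw, if_pos h] at h2
        rw [if_pos h, ← h2]
      · rw [if_neg h]
        by_cases hEc : w + v ∈ E
        · have h2 := hmain (w + v) hEc
          rw [hw, if_neg h] at h2
          rw [hxE _ hEc, ← h2]
        · have h2 : x (w + v) = z.1 (w + v - v) := by
            rw [hxdef]; simp only [hEc, if_false]
          rw [h2, hw]
    rw [h1, ← hz2]
end TM

lemma integral_partition {X : Type*} [MeasurableSpace X] (μ : Measure X) [IsFiniteMeasure μ]
    {ι : Type*} [Fintype ι] (A : ι → Set X) (hmeas : ∀ j, MeasurableSet (A j))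
    (hdisj : ∀ i j, i ≠ j → Disjoint (A i) (A j)) (hcover : ∀ x, ∃ j, x ∈ A j)
    (g : X → ℝ) (c : ι → ℝ) (hg : ∀ j, ∀ y ∈ A j, g y = c j) :
    Integrable g μ ∧ ∫ y, g y ∂μ = ∑ j, c j * (μ (A j)).toReal := by
  have hgeq : g = fun y => ∑ j, (A j).indicator (fun _ => c j) y := by
    funext y
    obtain ⟨j₀, hj₀⟩ := hcover y
    rw [Finset.sum_eq_single j₀]
    · rw [indicator_of_mem hj₀, hg j₀ y hj₀]
    · intro j _ hj
      exact indicator_of_notMem (fun hy => disjoint_left.1 (hdisj j j₀ hj) hy hj₀) _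
    · simp
  have hint : ∀ j, Integrable ((A j).indicator (fun _ => c j)) μ := fun j =>
    (integrable_indicator_iff (hmeas j)).2 (integrableOn_const (measure_lt_top μ _).ne)
  constructor
  · rw [hgeq]; exact integrable_finset_sum _ fun j _ => hint j
  · rw [hgeq, integral_finset_sum _ fun j _ => hint j]
    refine Finset.sum_congr rfl fun j _ => ?_
    rw [integral_indicator_const _ (hmeas j), smul_eq_mul, mul_comm, measureReal_def]


def extp (hn : 0 < n) (E : Finset (Fin d → ℤ)) (ρ : {u // u ∈ E} → Fin n) :
    (Fin d → ℤ) → Fin n :=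
  fun u => if h : u ∈ E then ρ ⟨u, h⟩ else ⟨0, hn⟩

lemma extp_mem (hn : 0 < n) (E : Finset (Fin d → ℤ)) (ρ : {u // u ∈ E} → Fin n)
    {u : Fin d → ℤ} (hu : u ∈ E) : extp hn E ρ u = ρ ⟨u, hu⟩ := dif_pos hu

lemma cocycle (hd : 1 ≤ d) (hn : 2 ≤ n)
    {T₁ T₂ : Tape d n k → Tape d n k}
    (hTM₂ : IsTapeTM d n k T₂)
    {s₁ s₂ s₁₂ : Tape d n k → Fin d → ℤ}
    (hs₁ : IsShiftIndicator d n k T₁ s₁) (hs₂ : IsShiftIndicator d n k T₂ s₂)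
    (hs₁₂ : IsShiftIndicator d n k (T₁ ∘ T₂) s₁₂) :
    ∀ z : Tape d n k, s₁₂ z = s₁ (T₂ z) + s₂ z := by
  haveI : Nonempty (Fin d) := ⟨⟨0, hd⟩⟩
  obtain ⟨Fi, Fo, f, hloc, hT⟩ := hTM₂
  obtain ⟨E₁, hE₁⟩ := uniform_dep hs₁.1
  obtain ⟨E₂, hE₂⟩ := uniform_dep hs₂.1
  obtain ⟨E₁₂, hE₁₂⟩ := uniform_dep hs₁₂.1
  obtain ⟨hc₁, F₁, hF₁⟩ := hs₁
  obtain ⟨hc₂, F₂, hF₂⟩ := hs₂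
  obtain ⟨hc₁₂, F₁₂, hF₁₂⟩ := hs₁₂
  rintro ⟨x, q⟩
  set v : Fin d → ℤ := (f (x, q)).2.2 with hv
  set a : Fin d → ℤ := s₁₂ (x, q) with ha
  set c : Fin d → ℤ := s₁ (T₂ (x, q)) with hc
  set b : Fin d → ℤ := c + s₂ (x, q) with hb
  show a = b
  by_contra hab
  set Ebig : Finset (Fin d → ℤ) := E₁₂ ∪ E₂ ∪ Fi ∪ E₁.image (· + v) with hEbig
  set bad : Finset (Fin d → ℤ) :=
    F₁₂ ∪ F₁ ∪ F₂.image (· + c) ∪ Ebig.image (· + a) ∪ Ebig.image (· + b) with hbad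
  obtain ⟨u₀, hu₀⟩ := bad.exists_notMem
  have hu₀F₁₂ : u₀ ∉ F₁₂ := fun h => hu₀ (by simp [hbad, h])
  have hu₀F₁ : u₀ ∉ F₁ := fun h => hu₀ (by simp [hbad, h])
  have hu₀F₂ : u₀ - c ∉ F₂ := fun h => hu₀ (by
    simp only [hbad, Finset.mem_union, Finset.mem_image]
    exact Or.inl (Or.inl (Or.inr ⟨u₀ - c, h, sub_add_cancel u₀ c⟩)))
  have hu₀a : u₀ - a ∉ Ebig := fun h => hu₀ (by
    simp only [hbad, Finset.mem_union, Finset.mem_image]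
    exact Or.inl (Or.inr ⟨u₀ - a, h, sub_add_cancel u₀ a⟩))
  have hu₀b : u₀ - b ∉ Ebig := fun h => hu₀ (by
    simp only [hbad, Finset.mem_union, Finset.mem_image]
    exact Or.inr ⟨u₀ - b, h, sub_add_cancel u₀ b⟩)
  have hne : u₀ - a ≠ u₀ - b := fun h => hab (by
    have := sub_right_injective h; exact this)
  set x' : (Fin d → ℤ) → Fin n :=
    fun u => if u = u₀ - a then ⟨0, by omega⟩ else if u = u₀ - b then ⟨1, by omega⟩ else x u
    with hx'
  have hagree : ∀ u ∈ Ebig, x' u = x u := by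
    intro u hu
    have h1 : u ≠ u₀ - a := fun h => hu₀a (h ▸ hu)
    have h2 : u ≠ u₀ - b := fun h => hu₀b (h ▸ hu)
    simp only [hx']
    rw [if_neg h1, if_neg h2]
  have hE₁₂sub : ∀ u ∈ E₁₂, x' u = x u := fun u hu => hagree u (by simp [hEbig, hu])
  have hE₂sub : ∀ u ∈ E₂, x' u = x u := fun u hu => hagree u (by simp [hEbig, hu])
  have hFisub : ∀ u ∈ Fi, x' u = x u := fun u hu => hagree u (by simp [hEbig, hu])
  have hfx' : f (x', q) = f (x, q) := hloc x' x q hFisub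
  have ha' : s₁₂ (x', q) = a := hE₁₂ x' x q hE₁₂sub
  have hs₂' : s₂ (x', q) = s₂ (x, q) := hE₂ x' x q hE₂sub
  -- the tapes T₂(x',q) and T₂(x,q) agree on E₁
  have htape : ∀ w ∈ E₁, (T₂ (x', q)).1 w = (T₂ (x, q)).1 w := by
    intro w hw
    rw [hT x' q, hT x q, hfx']
    simp only [shiftC, sub_neg_eq_add, ← hv]
    by_cases h : w + v ∈ Fo
    · simp [h]
    · simp only [h, if_false]
      exact hagree (w + v) (by
        simp only [hEbig, Finset.mem_union, Finset.mem_image]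
        exact Or.inr ⟨w, hw, rfl⟩)
  have hq' : (T₂ (x', q)).2 = (T₂ (x, q)).2 := by rw [hT x' q, hT x q, hfx']
  have hc' : s₁ (T₂ (x', q)) = c := by
    have h1 : T₂ (x', q) = ((T₂ (x', q)).1, (T₂ (x, q)).2) := by
      rw [← hq']
    have h2 : T₂ (x, q) = ((T₂ (x, q)).1, (T₂ (x, q)).2) := rfl
    rw [hc, h1, h2]
    exact hE₁ _ _ _ htape
  -- now the three indicator identities at u₀ for (x', q)
  have key₁₂ := hF₁₂ x' q u₀ hu₀F₁₂
  rw [Function.comp_apply] at key₁₂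
  have key₁ := hF₁ (T₂ (x', q)).1 (T₂ (x', q)).2 u₀ hu₀F₁
  rw [Prod.mk.eta] at key₁
  have hu₀F₂' : u₀ - s₁ (T₂ (x', q)) ∉ F₂ := by rwa [hc']
  have key₂ := hF₂ x' q (u₀ - s₁ (T₂ (x', q))) hu₀F₂'
  -- combine
  have chain : x' (u₀ - a) = x' (u₀ - b) := by
    have e1 : x' (u₀ - a) = (T₁ (T₂ (x', q))).1 u₀ := by
      rw [key₁₂]; simp only [shiftC, ha']
    have e2 : (T₁ (T₂ (x', q))).1 u₀ = (T₂ (x', q)).1 (u₀ - s₁ (T₂ (x', q))) := by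
      rw [key₁]; simp only [shiftC]
    have e3 : (T₂ (x', q)).1 (u₀ - s₁ (T₂ (x', q))) = x' (u₀ - b) := by
      rw [key₂]
      simp only [shiftC, hc', hs₂', hb]
      rw [sub_sub]
    rw [e1, e2, e3]
  have hA : x' (u₀ - a) = ⟨0, by omega⟩ := by simp [hx']
  have hB : x' (u₀ - b) = ⟨1, by omega⟩ := by
    simp [hx', (show u₀ - b ≠ u₀ - a from fun h => hne h.symm)]
  rw [hA, hB] at chain
  have h01 : (0 : ℕ) = 1 := congrArg Fin.val chain
  omega

end AvgMove

/-- The average movement `α(T) = ∫ s_T dμ` is a group homomorphism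
`RTM_fix(ℤ^d,n,k) → ℚ^d`: for reversible moving-tape machines `T₁, T₂`, with shift
indicators `s₁, s₂` and `s₁₂` (of `T₁ ∘ T₂`), we have `α(T₁ ∘ T₂) = α(T₁) + α(T₂)`
(coordinatewise, with the values read in `ℝ ⊇ ℚ`). -/
theorem averageMovement_add
    (d n k : ℕ) (hd : 1 ≤ d) (hn : 2 ≤ n) (hk : 1 ≤ k)
    (μ : @Measure (Tape d n k) (borel (Tape d n k)))
    (hμ : ∀ (F : Finset (Fin d → ℤ)) (p : (Fin d → ℤ) → Fin n) (q : Fin k),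
        μ {y : Tape d n k | (∀ u ∈ F, y.1 u = p u) ∧ y.2 = q} =
          1 / ((n : ENNReal) ^ F.card * (k : ENNReal)))
    (T₁ T₂ : Tape d n k → Tape d n k)
    (hT₁ : IsTapeTM d n k T₁ ∧ ∃ T' , IsTapeTM d n k T' ∧ T₁ ∘ T' = id ∧ T' ∘ T₁ = id)
    (hT₂ : IsTapeTM d n k T₂ ∧ ∃ T' , IsTapeTM d n k T' ∧ T₂ ∘ T' = id ∧ T' ∘ T₂ = id)
    (s₁ s₂ s₁₂ : Tape d n k → (Fin d → ℤ))
    (hs₁ : IsShiftIndicator d n k T₁ s₁)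
    (hs₂ : IsShiftIndicator d n k T₂ s₂)
    (hs₁₂ : IsShiftIndicator d n k (T₁ ∘ T₂) s₁₂) :
    ∀ i : Fin d,
      (∫ p, ((s₁₂ p i : ℤ) : ℝ) ∂μ) =
        (∫ p, ((s₁ p i : ℤ) : ℝ) ∂μ) + ∫ p, ((s₂ p i : ℤ) : ℝ) ∂μ := by
  classical
  intro i
  letI msp : MeasurableSpace (Tape d n k) := borel (Tape d n k)
  haveI : BorelSpace (Tape d n k) := ⟨rfl⟩
  have hn0 : 0 < n := by omega
  have hknz : ((k : ENNReal)) ≠ 0 := Nat.cast_ne_zero.mpr (by omega)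
  -- finiteness of μ
  haveI hfin : IsFiniteMeasure μ := by
    constructor
    have hcover : (univ : Set (Tape d n k)) =
        ⋃ q : Fin k, {y : Tape d n k |
          (∀ u ∈ (∅ : Finset (Fin d → ℤ)), y.1 u = (fun _ => (⟨0, hn0⟩ : Fin n)) u) ∧ y.2 = q} := by
      ext y
      simp
    rw [hcover]
    refine lt_of_le_of_lt (measure_iUnion_le _) ?_
    rw [tsum_fintype]
    refine ENNReal.sum_lt_top.2 fun q _ => ?_
    rw [hμ ∅ (fun _ => (⟨0, hn0⟩ : Fin n)) q]
    simp only [Finset.card_empty, pow_zero, one_mul]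
    exact ENNReal.div_lt_top ENNReal.one_ne_top hknz
  -- data of T₂ and its inverse
  obtain ⟨hTM₂, T', hTM', hcomp1, hcomp2⟩ := hT₂
  have hlinv : ∀ z, T' (T₂ z) = z := fun z => congrFun hcomp2 z
  have hrinv : ∀ z, T₂ (T' z) = z := fun z => congrFun hcomp1 z
  have hinjT' : Function.Injective T' := fun z w h => by
    rw [← hrinv z, h, hrinv]
  obtain ⟨Fi', Fo', f', hloc', hT'def⟩ := hTM'
  have hFo' : Fo' ⊆ Fi' := AvgMove.fo_subset_fi hn hk hinjT' hloc' hT'def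
  have hpre : ∀ S : Set (Tape d n k), T₂ ⁻¹' S = T' '' S := by
    intro S
    ext z
    constructor
    · intro hz
      exact ⟨T₂ z, hz, hlinv z⟩
    · rintro ⟨w, hw, rfl⟩
      show T₂ (T' w) ∈ S
      rw [hrinv w]
      exact hw
  obtain ⟨E₁, hE₁⟩ := AvgMove.uniform_dep hs₁.1
  obtain ⟨E₂, hE₂⟩ := AvgMove.uniform_dep hs₂.1
  -- the partition indexed by patterns on E and states
  set E : Finset (Fin d → ℤ) := E₁ ∪ Fi' with hEdef
  have hE₁E : E₁ ⊆ E := Finset.subset_union_left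
  have hFi'E : Fi' ⊆ E := Finset.subset_union_right
  set A : (({u // u ∈ E} → Fin n) × Fin k) → Set (Tape d n k) :=
    fun j => AvgMove.Cyl E (AvgMove.extp hn0 E j.1) j.2 with hAdef
  set B : (({u // u ∈ E} → Fin n) × Fin k) → Set (Tape d n k) :=
    fun j => T₂ ⁻¹' A j with hBdef
  have hAmeas : ∀ j, MeasurableSet (A j) := fun j =>
    (AvgMove.cyl_isOpen E _ j.2).measurableSet
  have hBeq : ∀ j, B j = T' '' A j := fun j => hpre (A j)
  have hBcyl : ∀ j, T' '' A j =
      AvgMove.Cyl ((E.image (fun u => u - (f' (AvgMove.extp hn0 E j.1, j.2)).2.2)))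
        (fun w => if (w + (f' (AvgMove.extp hn0 E j.1, j.2)).2.2) ∈ Fo'
            then (f' (AvgMove.extp hn0 E j.1, j.2)).1 (w + (f' (AvgMove.extp hn0 E j.1, j.2)).2.2)
            else AvgMove.extp hn0 E j.1 (w + (f' (AvgMove.extp hn0 E j.1, j.2)).2.2))
        (f' (AvgMove.extp hn0 E j.1, j.2)).2.1 := fun j =>
    AvgMove.image_cyl hloc' hT'def hFo' hFi'E (AvgMove.extp hn0 E j.1) j.2
  have hBmeas : ∀ j, MeasurableSet (B j) := fun j => by
    rw [hBeq j, hBcyl j]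
    exact (AvgMove.cyl_isOpen _ _ _).measurableSet
  have hμA : ∀ j, μ (A j) = 1 / ((n : ENNReal) ^ E.card * (k : ENNReal)) := fun j =>
    hμ E (AvgMove.extp hn0 E j.1) j.2
  have hμB : ∀ j, μ (B j) = 1 / ((n : ENNReal) ^ E.card * (k : ENNReal)) := by
    intro j
    rw [hBeq j, hBcyl j]
    have hcard : (E.image (fun u => u - (f' (AvgMove.extp hn0 E j.1, j.2)).2.2)).card = E.card :=
      Finset.card_image_of_injective E (fun a b h => by
        have := congrArg (fun w => w + (f' (AvgMove.extp hn0 E j.1, j.2)).2.2) h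
        simpa [sub_add_cancel] using this)
    rw [← hcard]
    exact hμ _ _ _
  have hAdisj : ∀ j j', j ≠ j' → Disjoint (A j) (A j') := by
    intro j j' hjj'
    refine Set.disjoint_left.2 fun y hy hy' => hjj' ?_
    obtain ⟨hy1, hy2⟩ := hy
    obtain ⟨hy1', hy2'⟩ := hy'
    refine Prod.ext ?_ (hy2 ▸ hy2'.symm ▸ rfl)
    funext ρu
    have h1 := hy1 ρu.1 ρu.2
    have h2 := hy1' ρu.1 ρu.2
    rw [AvgMove.extp_mem hn0 E j.1 ρu.2] at h1
    rw [AvgMove.extp_mem hn0 E j'.1 ρu.2] at h2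
    rw [← Subtype.eta ρu ρu.2] at *
    rw [← h1, ← h2]
  have hBdisj : ∀ j j', j ≠ j' → Disjoint (B j) (B j') := fun j j' h =>
    (hAdisj j j' h).preimage T₂
  have hAcover : ∀ y : Tape d n k, ∃ j, y ∈ A j := by
    intro y
    refine ⟨(fun ρu => y.1 ρu.1, y.2), fun u hu => ?_, rfl⟩
    rw [AvgMove.extp_mem hn0 E _ hu]
  have hBcover : ∀ y : Tape d n k, ∃ j, y ∈ B j := by
    intro y
    obtain ⟨j, hj⟩ := hAcover (T₂ y)
    exact ⟨j, hj⟩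
  -- constants
  set cval : (({u // u ∈ E} → Fin n) × Fin k) → ℝ :=
    fun j => ((s₁ (AvgMove.extp hn0 E j.1, j.2) i : ℤ) : ℝ) with hcval
  have hg₁ : ∀ j, ∀ y ∈ A j, ((s₁ y i : ℤ) : ℝ) = cval j := by
    intro j y hy
    obtain ⟨hy1, hy2⟩ := hy
    have h1 : s₁ (y.1, y.2) = s₁ (AvgMove.extp hn0 E j.1, j.2) := by
      rw [hy2]
      exact hE₁ y.1 _ j.2 fun u hu => hy1 u (hE₁E hu)
    rw [Prod.mk.eta] at h1
    rw [hcval, h1]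
  have hg₂ : ∀ j, ∀ y ∈ B j, ((s₁ (T₂ y) i : ℤ) : ℝ) = cval j := fun j y hy =>
    hg₁ j (T₂ y) hy
  obtain ⟨hint₁, hval₁⟩ := AvgMove.integral_partition μ A hAmeas hAdisj hAcover
    (fun y => ((s₁ y i : ℤ) : ℝ)) cval hg₁
  obtain ⟨hint₂, hval₂⟩ := AvgMove.integral_partition μ B hBmeas hBdisj hBcover
    (fun y => ((s₁ (T₂ y) i : ℤ) : ℝ)) cval hg₂
  have hints : (∫ y, ((s₁ (T₂ y) i : ℤ) : ℝ) ∂μ) = ∫ y, ((s₁ y i : ℤ) : ℝ) ∂μ := by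
    rw [hval₁, hval₂]
    exact Finset.sum_congr rfl fun j _ => by rw [hμA j, hμB j]
  -- integrability of the s₂-integrand via its own partition
  set A₂ : (({u // u ∈ E₂} → Fin n) × Fin k) → Set (Tape d n k) :=
    fun j => AvgMove.Cyl E₂ (AvgMove.extp hn0 E₂ j.1) j.2 with hA₂def
  have hA₂meas : ∀ j, MeasurableSet (A₂ j) := fun j =>
    (AvgMove.cyl_isOpen E₂ _ j.2).measurableSet
  have hA₂disj : ∀ j j', j ≠ j' → Disjoint (A₂ j) (A₂ j') := by
    intro j j' hjj'
    refine Set.disjoint_left.2 fun y hy hy' => hjj' ?_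
    obtain ⟨hy1, hy2⟩ := hy
    obtain ⟨hy1', hy2'⟩ := hy'
    refine Prod.ext ?_ (hy2 ▸ hy2'.symm ▸ rfl)
    funext ρu
    have h1 := hy1 ρu.1 ρu.2
    have h2 := hy1' ρu.1 ρu.2
    rw [AvgMove.extp_mem hn0 E₂ j.1 ρu.2] at h1
    rw [AvgMove.extp_mem hn0 E₂ j'.1 ρu.2] at h2
    rw [← Subtype.eta ρu ρu.2] at *
    rw [← h1, ← h2]
  have hA₂cover : ∀ y : Tape d n k, ∃ j, y ∈ A₂ j := by
    intro y
    refine ⟨(fun ρu => y.1 ρu.1, y.2), fun u hu => ?_, rfl⟩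
    rw [AvgMove.extp_mem hn0 E₂ _ hu]
  have hg₃ : ∀ j, ∀ y ∈ A₂ j, ((s₂ y i : ℤ) : ℝ) =
      ((s₂ (AvgMove.extp hn0 E₂ j.1, j.2) i : ℤ) : ℝ) := by
    intro j y hy
    obtain ⟨hy1, hy2⟩ := hy
    have h1 : s₂ (y.1, y.2) = s₂ (AvgMove.extp hn0 E₂ j.1, j.2) := by
      rw [hy2]
      exact hE₂ y.1 _ j.2 fun u hu => hy1 u hu
    rw [Prod.mk.eta] at h1
    rw [h1]
  obtain ⟨hint₃, -⟩ := AvgMove.integral_partition μ A₂ hA₂meas hA₂disj hA₂cover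
    (fun y => ((s₂ y i : ℤ) : ℝ))
    (fun j => ((s₂ (AvgMove.extp hn0 E₂ j.1, j.2) i : ℤ) : ℝ)) hg₃
  -- the cocycle identity
  have hco := AvgMove.cocycle hd hn hTM₂ hs₁ hs₂ hs₁₂
  have hfun : (fun p : Tape d n k => ((s₁₂ p i : ℤ) : ℝ)) =
      fun p => ((s₁ (T₂ p) i : ℤ) : ℝ) + ((s₂ p i : ℤ) : ℝ) := by
    funext p
    rw [hco p]
    simp [Pi.add_apply]
  calc (∫ p, ((s₁₂ p i : ℤ) : ℝ) ∂μ)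
      = ∫ p, (((s₁ (T₂ p) i : ℤ) : ℝ) + ((s₂ p i : ℤ) : ℝ)) ∂μ := by rw [hfun]
    _ = (∫ p, ((s₁ (T₂ p) i : ℤ) : ℝ) ∂μ) + ∫ p, ((s₂ p i : ℤ) : ℝ) ∂μ :=
        integral_add hint₂ hint₃
    _ = (∫ p, ((s₁ p i : ℤ) : ℝ) ∂μ) + ∫ p, ((s₂ p i : ℤ) : ℝ) ∂μ := by rw [hints]
end
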